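/- arXiv:math/0505148 — 5 statements merged into one kernel-verified Lean document; each statement's English description precedes it below -/
import Mathlib

section
/- Let x, y ∈ ℤ² be non-collinear lattice vectors, and for z = (a,b) ∈ ℤ² \ {0} let deg(z) = gcd(|a|,|b|). Then |det(x,y)| = deg(x) + deg(y) + deg(x+y) − 2 + 2·I, where I is the number of lattice points lying in the interior of the triangle with vertices 0, x, x+y. -/
/-- The image of a lattice point in the real plane. -/
def toR2 (p : ℤ × ℤ) : ℝ × ℝ := ((p.1 : ℝ), (p.2 : ℝ))

/-- The triangle (convex hull) with vertices `0`, `x`, `x + y` in the real plane. -/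
def tri (x y : ℤ × ℤ) : Set (ℝ × ℝ) := convexHull ℝ {(0 : ℝ × ℝ), toR2 x, toR2 (x + y)}

namespace Pick

def uu (y p : ℤ × ℤ) : ℤ := p.1 * y.2 - p.2 * y.1
def vv (x p : ℤ × ℤ) : ℤ := x.1 * p.2 - x.2 * p.1
def Lam (x y : ℤ × ℤ) : AddSubgroup (ℤ × ℤ) := AddSubgroup.closure {x, y}

lemma mem_Lam_left (x y : ℤ × ℤ) : x ∈ Lam x y :=
  AddSubgroup.subset_closure (by simp)

lemma mem_Lam_right (x y : ℤ × ℤ) : y ∈ Lam x y :=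
  AddSubgroup.subset_closure (by simp)

lemma Lam_le {x y : ℤ × ℤ} {H : AddSubgroup (ℤ × ℤ)} (hx : x ∈ H) (hy : y ∈ H) :
    Lam x y ≤ H := by
  rw [Lam, AddSubgroup.closure_le]
  intro z hz
  simp only [Set.mem_insert_iff, Set.mem_singleton_iff] at hz
  rcases hz with rfl | rfl
  · exact hx
  · exact hy

lemma Lam_comm (x y : ℤ × ℤ) : Lam x y = Lam y x := by
  unfold Lam; rw [Set.pair_comm]

lemma Lam_neg_left (x y : ℤ × ℤ) : Lam (-x) y = Lam x y := by
  apply le_antisymm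
  · exact Lam_le (AddSubgroup.neg_mem _ (mem_Lam_left x y)) (mem_Lam_right x y)
  · refine Lam_le ?_ (mem_Lam_right (-x) y)
    have := AddSubgroup.neg_mem _ (mem_Lam_left (-x) y)
    simpa using this

lemma Lam_shear (x y : ℤ × ℤ) (k : ℤ) : Lam x (y - k • x) = Lam x y := by
  apply le_antisymm
  · exact Lam_le (mem_Lam_left x y)
      (AddSubgroup.sub_mem _ (mem_Lam_right x y)
        (AddSubgroup.zsmul_mem _ (mem_Lam_left x y) k))
  · refine Lam_le (mem_Lam_left x (y - k • x)) ?_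
    have := AddSubgroup.add_mem _ (mem_Lam_right x (y - k • x))
      (AddSubgroup.zsmul_mem _ (mem_Lam_left x (y - k • x)) k)
    simpa using this

end Pick

namespace Pick

lemma dvd_small_eq_zero {c t : ℤ} (hc : 0 < c) (h : c ∣ t) (h1 : -c < t) (h2 : t < c) :
    t = 0 := by
  obtain ⟨k, rfl⟩ := h
  rcases lt_trichotomy k 0 with hk | hk | hk
  · nlinarith
  · simp [hk]
  · nlinarith

def Sgrp (a b c : ℤ) : AddSubgroup (ℤ × ℤ) where
  carrier := {w | c ∣ w.2 ∧ a * c ∣ w.1 * c - w.2 * b}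
  zero_mem' := by constructor <;> simp
  add_mem' := by
    rintro p q ⟨h1, h2⟩ ⟨h3, h4⟩
    refine ⟨dvd_add h1 h3, ?_⟩
    have e : (p + q).1 * c - (p + q).2 * b = (p.1 * c - p.2 * b) + (q.1 * c - q.2 * b) := by
      simp only [Prod.fst_add, Prod.snd_add]; ring
    rw [e]; exact dvd_add h2 h4
  neg_mem' := by
    rintro p ⟨h1, h2⟩
    refine ⟨dvd_neg.2 h1, ?_⟩
    have e : (-p).1 * c - (-p).2 * b = -(p.1 * c - p.2 * b) := by
      simp only [Prod.fst_neg, Prod.snd_neg]; ring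
    rw [e]; exact dvd_neg.2 h2

lemma card_quot_base {a b c : ℤ} (ha : 0 < a) (hc : 0 < c) :
    Nat.card ((ℤ × ℤ) ⧸ Lam (a, 0) (b, c)) = (a * c).natAbs := by
  have hle : Lam (a, 0) (b, c) ≤ Sgrp a b c := by
    refine Lam_le ⟨by simp, ?_⟩ ⟨dvd_refl c, ?_⟩
    · simpa using Dvd.intro 1 rfl
    · rw [show b * c - c * b = 0 from by ring]; exact dvd_zero _
  set box : Set (ℤ × ℤ) := ↑(Finset.Ico 0 a ×ˢ Finset.Ico 0 c) with hbox
  have hmem : ∀ p : ℤ × ℤ, p ∈ box ↔ 0 ≤ p.1 ∧ p.1 < a ∧ 0 ≤ p.2 ∧ p.2 < c := by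
    intro p
    simp [hbox, Finset.mem_Ico, and_assoc]
  have hbij : Function.Bijective
      (fun p : box => (QuotientAddGroup.mk p.1 : (ℤ × ℤ) ⧸ Lam (a, 0) (b, c))) := by
    constructor
    · rintro ⟨p, hp⟩ ⟨q, hq⟩ hpq
      have hsub : p - q ∈ Lam (a, 0) (b, c) := by
        rwa [QuotientAddGroup.eq_iff_sub_mem] at hpq
      have hS := hle hsub
      obtain ⟨hd1, hd2⟩ := hS
      rw [hmem] at hp hq
      have e2 : p.2 - q.2 = 0 := by
        refine dvd_small_eq_zero hc hd1 ?_ ?_ <;> omega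
      have hd2' : a * c ∣ (p.1 - q.1) * c := by
        have e : (p - q).1 * c - (p - q).2 * b = (p.1 - q.1) * c := by
          simp only [Prod.fst_sub, Prod.snd_sub]
          rw [show p.2 - q.2 = 0 by omega]; ring
        rwa [e] at hd2
      have hd1' : a ∣ p.1 - q.1 := by
        have := (mul_dvd_mul_iff_right hc.ne').1 hd2'
        exact this
      have e1 : p.1 - q.1 = 0 := by
        refine dvd_small_eq_zero ha hd1' ?_ ?_ <;> omega
      have hpq2 : p = q := Prod.ext (by omega) (by omega)
      exact Subtype.ext hpq2
    · intro q
      obtain ⟨z, rfl⟩ := QuotientAddGroup.mk_surjective q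
      set m := z.2 / c with hm
      set n := (z.1 - m * b) / a with hn
      refine ⟨⟨(z.1 - m * b - n * a, z.2 - m * c), ?_⟩, ?_⟩
      · rw [hmem]
        have h1 : z.1 - m * b - n * a = (z.1 - m * b) % a := by
          rw [Int.emod_def, hn]; ring
        have h2 : z.2 - m * c = z.2 % c := by
          rw [Int.emod_def, hm]; ring
        refine ⟨?_, ?_, ?_, ?_⟩
        · rw [h1]; exact Int.emod_nonneg _ ha.ne'
        · rw [h1]; exact Int.emod_lt_of_pos _ ha
        · rw [h2]; exact Int.emod_nonneg _ hc.ne'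
        · rw [h2]; exact Int.emod_lt_of_pos _ hc
      · rw [QuotientAddGroup.eq_iff_sub_mem]
        have e : (z.1 - m * b - n * a, z.2 - m * c) - z = (-n) • ((a:ℤ), (0:ℤ)) + (-m) • (b, c) := by
          refine Prod.ext ?_ ?_ <;>
          simp only [Prod.fst_sub, Prod.snd_sub, Prod.fst_add, Prod.snd_add,
            Prod.smul_fst, Prod.smul_snd, smul_eq_mul] <;> ring
        rw [e]
        exact AddSubgroup.add_mem _
          (AddSubgroup.zsmul_mem _ (mem_Lam_left _ _) _)
          (AddSubgroup.zsmul_mem _ (mem_Lam_right _ _) _)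
  have hcard := Nat.card_eq_of_bijective _ hbij
  rw [← hcard, Nat.card_coe_set_eq, hbox, Set.ncard_coe_finset, Finset.card_product,
    Int.card_Ico, Int.card_Ico]
  have h1 : (a - 0).toNat = a.natAbs := by omega
  have h2 : (c - 0).toNat = c.natAbs := by omega
  rw [h1, h2, Int.natAbs_mul]

end Pick

namespace Pick

lemma Lam_neg_right (x y : ℤ × ℤ) : Lam x (-y) = Lam x y := by
  rw [Lam_comm, Lam_neg_left, Lam_comm]

lemma card_quot_base' (a b c : ℤ) (ha : a ≠ 0) (hc : c ≠ 0) :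
    Nat.card ((ℤ × ℤ) ⧸ Lam (a, 0) (b, c)) = (a * c).natAbs := by
  have e1 : ∀ u v : ℤ, ((u, v) : ℤ × ℤ) = -(-u, -v) := by intro u v; ext <;> simp
  rcases ha.lt_or_gt with h1 | h1 <;> rcases hc.lt_or_gt with h2 | h2
  · rw [show ((a, 0) : ℤ × ℤ) = -(-a, 0) from by ext <;> simp, e1 b c, Lam_neg_left,
      Lam_neg_right, card_quot_base (by omega) (by omega), Int.natAbs_mul, Int.natAbs_mul,
      Int.natAbs_neg, Int.natAbs_neg]
  · rw [show ((a, 0) : ℤ × ℤ) = -(-a, 0) from by ext <;> simp, Lam_neg_left,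
      card_quot_base (by omega) h2, Int.natAbs_mul, Int.natAbs_mul, Int.natAbs_neg]
  · rw [e1 b c, Lam_neg_right, card_quot_base h1 (by omega), Int.natAbs_mul, Int.natAbs_mul,
      Int.natAbs_neg]
  · exact card_quot_base h1 h2

lemma card_quot (x y : ℤ × ℤ) (h : x.1 * y.2 - x.2 * y.1 ≠ 0) :
    Nat.card ((ℤ × ℤ) ⧸ Lam x y) = (x.1 * y.2 - x.2 * y.1).natAbs := by
  by_cases h2 : x.2 = 0
  · obtain ⟨a, a2⟩ := x
    obtain ⟨b, c⟩ := y
    simp only at h2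
    subst h2
    simp only at h ⊢
    have ha : a ≠ 0 := by intro h0; exact h (by rw [h0]; ring)
    have hc : c ≠ 0 := by intro h0; exact h (by rw [h0]; ring)
    rw [show a * c - 0 * b = a * c from by ring]
    exact card_quot_base' a b c ha hc
  · set k := y.2 / x.2 with hk
    set y' := y - k • x with hy'
    have hy'2 : y'.2 = y.2 % x.2 := by
      rw [hy', Int.emod_def]
      simp only [Prod.snd_sub, Prod.smul_snd, smul_eq_mul]
      ring
    have hdec : y'.2.natAbs < x.2.natAbs := by
      have h1 := Int.emod_nonneg y.2 h2
      have h2' := Int.emod_lt y.2 h2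
      rw [hy'2]
      rcases abs_cases x.2 with ⟨e, _⟩ | ⟨e, _⟩ <;> omega
    have hdet : y'.1 * x.2 - y'.2 * x.1 = -(x.1 * y.2 - x.2 * y.1) := by
      rw [hy']
      simp only [Prod.fst_sub, Prod.smul_fst, Prod.snd_sub, Prod.smul_snd, smul_eq_mul]
      ring
    have h' : y'.1 * x.2 - y'.2 * x.1 ≠ 0 := by
      rw [hdet, neg_ne_zero]; exact h
    have hrec := card_quot y' x h'
    calc Nat.card ((ℤ × ℤ) ⧸ Lam x y) = Nat.card ((ℤ × ℤ) ⧸ Lam y' x) := by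
          rw [Lam_comm y' x, hy', Lam_shear]
    _ = (y'.1 * x.2 - y'.2 * x.1).natAbs := hrec
    _ = (x.1 * y.2 - x.2 * y.1).natAbs := by rw [hdet, Int.natAbs_neg]
termination_by x.2.natAbs
decreasing_by exact hdec

end Pick

namespace Pick

def dd (x y : ℤ × ℤ) : ℤ := x.1 * y.2 - x.2 * y.1

lemma uu_sub (y p q : ℤ × ℤ) : uu y (p - q) = uu y p - uu y q := by
  simp only [uu, Prod.fst_sub, Prod.snd_sub]; ring

lemma vv_sub (x p q : ℤ × ℤ) : vv x (p - q) = vv x p - vv x q := by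
  simp only [vv, Prod.fst_sub, Prod.snd_sub]; ring

lemma uu_smul (y : ℤ × ℤ) (m : ℤ) (p : ℤ × ℤ) : uu y (m • p) = m * uu y p := by
  simp only [uu, Prod.smul_fst, Prod.smul_snd, smul_eq_mul]; ring

lemma vv_smul (x : ℤ × ℤ) (m : ℤ) (p : ℤ × ℤ) : vv x (m • p) = m * vv x p := by
  simp only [vv, Prod.smul_fst, Prod.smul_snd, smul_eq_mul]; ring

lemma uu_self (x y : ℤ × ℤ) : uu y x = dd x y := rfl
lemma uu_y (y : ℤ × ℤ) : uu y y = 0 := by simp only [uu]; ring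
lemma vv_self (x : ℤ × ℤ) : vv x x = 0 := by simp only [vv]; ring
lemma vv_y (x y : ℤ × ℤ) : vv x y = dd x y := rfl

lemma recover_fst (x y p : ℤ × ℤ) : dd x y * p.1 = uu y p * x.1 + vv x p * y.1 := by
  simp only [uu, vv, dd]; ring

lemma recover_snd (x y p : ℤ × ℤ) : dd x y * p.2 = uu y p * x.2 + vv x p * y.2 := by
  simp only [uu, vv, dd]; ring

/-- The subgroup of points whose coordinates `uu, vv` are divisible by the determinant. -/
def Sgrp2 (x y : ℤ × ℤ) : AddSubgroup (ℤ × ℤ) where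
  carrier := {w | dd x y ∣ uu y w ∧ dd x y ∣ vv x w}
  zero_mem' := by constructor <;> simp [uu, vv]
  add_mem' := by
    rintro p q ⟨h1, h2⟩ ⟨h3, h4⟩
    constructor
    · have e : uu y (p + q) = uu y p + uu y q := by
        simp only [uu, Prod.fst_add, Prod.snd_add]; ring
      rw [e]; exact dvd_add h1 h3
    · have e : vv x (p + q) = vv x p + vv x q := by
        simp only [vv, Prod.fst_add, Prod.snd_add]; ring
      rw [e]; exact dvd_add h2 h4
  neg_mem' := by
    rintro p ⟨h1, h2⟩
    constructor
    · have e : uu y (-p) = -(uu y p) := by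
        simp only [uu, Prod.fst_neg, Prod.snd_neg]; ring
      rw [e]; exact dvd_neg.2 h1
    · have e : vv x (-p) = -(vv x p) := by
        simp only [vv, Prod.fst_neg, Prod.snd_neg]; ring
      rw [e]; exact dvd_neg.2 h2

lemma Lam_le_Sgrp2 (x y : ℤ × ℤ) : Lam x y ≤ Sgrp2 x y :=
  Lam_le ⟨⟨1, by rw [uu_self, mul_one]⟩, by rw [vv_self]; exact dvd_zero _⟩
    ⟨by rw [uu_y]; exact dvd_zero _, ⟨1, by rw [vv_y, mul_one]⟩⟩

def Pset (x y : ℤ × ℤ) : Set (ℤ × ℤ) :=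
  {p | 0 ≤ uu y p ∧ uu y p < dd x y ∧ 0 ≤ vv x p ∧ vv x p < dd x y}

/-- Points determined by their `uu, vv` coordinates. -/
lemma uv_inj (x y : ℤ × ℤ) (hd : dd x y ≠ 0) {p q : ℤ × ℤ}
    (h1 : uu y p = uu y q) (h2 : vv x p = vv x q) : p = q := by
  have e1 := recover_fst x y p
  have e1' := recover_fst x y q
  have e2 := recover_snd x y p
  have e2' := recover_snd x y q
  rw [h1, h2] at e1 e2
  refine Prod.ext ?_ ?_
  · exact mul_left_cancel₀ hd (by rw [e1, e1'])
  · exact mul_left_cancel₀ hd (by rw [e2, e2'])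

lemma card_Pset (x y : ℤ × ℤ) (hd : 0 < dd x y) :
    (Pset x y).ncard = (dd x y).natAbs := by
  have hd' : dd x y ≠ 0 := hd.ne'
  have hbij : Function.Bijective
      (fun p : Pset x y => (QuotientAddGroup.mk p.1 : (ℤ × ℤ) ⧸ Lam x y)) := by
    constructor
    · rintro ⟨p, hp⟩ ⟨q, hq⟩ hpq
      have hsub : p - q ∈ Lam x y := by
        rwa [QuotientAddGroup.eq_iff_sub_mem] at hpq
      obtain ⟨hu, hv⟩ := Lam_le_Sgrp2 x y hsub
      rw [uu_sub] at hu
      rw [vv_sub] at hv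
      obtain ⟨hp1, hp2, hp3, hp4⟩ := hp
      obtain ⟨hq1, hq2, hq3, hq4⟩ := hq
      have e1 : uu y p - uu y q = 0 := dvd_small_eq_zero hd hu (by omega) (by omega)
      have e2 : vv x p - vv x q = 0 := dvd_small_eq_zero hd hv (by omega) (by omega)
      have : p = q := uv_inj x y hd' (by omega) (by omega)
      exact Subtype.ext this
    · intro q
      obtain ⟨z, rfl⟩ := QuotientAddGroup.mk_surjective q
      set m := uu y z / dd x y with hm
      set n := vv x z / dd x y with hn
      set p := z - m • x - n • y with hp
      have hux : uu y x = dd x y := rfl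
      have hvy : vv x y = dd x y := rfl
      have hup : uu y p = uu y z % dd x y := by
        rw [hp, uu_sub, uu_sub, uu_smul, uu_smul, hux, uu_y, Int.emod_def, hm]
        ring
      have hvp : vv x p = vv x z % dd x y := by
        rw [hp, vv_sub, vv_sub, vv_smul, vv_smul, vv_self, hvy, Int.emod_def, hn]
        ring
      refine ⟨⟨p, ?_, ?_, ?_, ?_⟩, ?_⟩
      · rw [hup]; exact Int.emod_nonneg _ hd'
      · rw [hup]; exact Int.emod_lt_of_pos _ hd
      · rw [hvp]; exact Int.emod_nonneg _ hd'
      · rw [hvp]; exact Int.emod_lt_of_pos _ hd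
      · rw [QuotientAddGroup.eq_iff_sub_mem]
        have e : p - z = -(m • x) + -(n • y) := by
          rw [hp]; abel
        rw [e]
        exact AddSubgroup.add_mem _
          (AddSubgroup.neg_mem _ (AddSubgroup.zsmul_mem _ (mem_Lam_left _ _) _))
          (AddSubgroup.neg_mem _ (AddSubgroup.zsmul_mem _ (mem_Lam_right _ _) _))
  have hcard := Nat.card_eq_of_bijective _ hbij
  rw [← Nat.card_coe_set_eq, hcard]
  exact card_quot x y hd'

end Pick

namespace Pick

lemma collinear_exists (w p : ℤ × ℤ) (hw : w ≠ 0) (h : w.1 * p.2 = w.2 * p.1) :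
    ∃ m : ℤ, p = m • ((w.1 / (Int.gcd w.1 w.2 : ℤ), w.2 / (Int.gcd w.1 w.2 : ℤ)) : ℤ × ℤ) := by
  have hw' : w.1 ≠ 0 ∨ w.2 ≠ 0 := by
    by_contra hc
    push_neg at hc
    exact hw (Prod.ext hc.1 hc.2)
  have hgN : 0 < Int.gcd w.1 w.2 := by
    have : Int.gcd w.1 w.2 ≠ 0 := by
      rw [Ne, Int.gcd_eq_zero_iff]
      tauto
    omega
  have hgpos : (0:ℤ) < (Int.gcd w.1 w.2 : ℤ) := by exact_mod_cast hgN
  have hga : (Int.gcd w.1 w.2 : ℤ) * (w.1 / (Int.gcd w.1 w.2 : ℤ)) = w.1 :=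
    Int.mul_ediv_cancel' (Int.gcd_dvd_left _ _)
  have hgb : (Int.gcd w.1 w.2 : ℤ) * (w.2 / (Int.gcd w.1 w.2 : ℤ)) = w.2 :=
    Int.mul_ediv_cancel' (Int.gcd_dvd_right _ _)
  set a : ℤ := w.1 / (Int.gcd w.1 w.2 : ℤ) with ha
  set b : ℤ := w.2 / (Int.gcd w.1 w.2 : ℤ) with hb
  have hcop : Int.gcd a b = 1 := Int.gcd_div_gcd_div_gcd hgN
  have hab : a * p.2 = b * p.1 := by
    have h2 : (Int.gcd w.1 w.2 : ℤ) * (a * p.2) = (Int.gcd w.1 w.2 : ℤ) * (b * p.1) := by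
      rw [← mul_assoc, ← mul_assoc, hga, hgb]; exact h
    exact mul_left_cancel₀ hgpos.ne' h2
  by_cases haz : a = 0
  · have hbz : b ≠ 0 := by
      intro hbz
      rw [haz, hbz] at hcop
      simp [Int.gcd] at hcop
    have hp1 : p.1 = 0 := by
      have h3 : b * p.1 = 0 := by rw [← hab, haz]; ring
      exact (mul_eq_zero.1 h3).resolve_left hbz
    have hb1 : b = 1 ∨ b = -1 := by
      have h4 : b.natAbs = 1 := by
        rw [haz] at hcop
        simpa [Int.gcd] using hcop
      omega
    refine ⟨p.2 * b, Prod.ext ?_ ?_⟩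
    · rw [Prod.smul_fst, hp1]
      simp [haz]
    · rw [Prod.smul_snd]
      simp only [smul_eq_mul]
      rcases hb1 with h1 | h1 <;> rw [h1] <;> ring
  · have hdvd : a ∣ p.1 := by
      have h1 : a ∣ p.1 * b := ⟨p.2, by rw [hab]; ring⟩
      have hco : IsCoprime a b := Int.isCoprime_iff_gcd_eq_one.2 hcop
      exact hco.dvd_of_dvd_mul_right h1
    obtain ⟨m, hm⟩ := hdvd
    refine ⟨m, Prod.ext ?_ ?_⟩
    · rw [Prod.smul_fst]
      simp only [smul_eq_mul]
      rw [hm]; ring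
    · rw [Prod.smul_snd]
      simp only [smul_eq_mul]
      have h5 : a * p.2 = a * (m * b) := by rw [hab, hm]; ring
      exact mul_left_cancel₀ haz h5

end Pick

namespace Pick

lemma seg_count (w : ℤ × ℤ) (hw : w ≠ 0) (S : Set (ℤ × ℤ)) (F : ℤ × ℤ → ℤ)
    (hFsmul : ∀ (m : ℤ) (p : ℤ × ℤ), F (m • p) = m * F p)
    (hFw : 0 < F w)
    (hchar : ∀ p, p ∈ S ↔ (w.1 * p.2 = w.2 * p.1 ∧ 0 < F p ∧ F p < F w)) :
    S.ncard = Int.gcd w.1 w.2 - 1 := by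
  have hw' : w.1 ≠ 0 ∨ w.2 ≠ 0 := by
    by_contra hc
    push_neg at hc
    exact hw (Prod.ext hc.1 hc.2)
  have hgN : 0 < Int.gcd w.1 w.2 := by
    have : Int.gcd w.1 w.2 ≠ 0 := by
      rw [Ne, Int.gcd_eq_zero_iff]
      tauto
    omega
  have hgpos : (0:ℤ) < (Int.gcd w.1 w.2 : ℤ) := by exact_mod_cast hgN
  obtain ⟨wh, hwhdef⟩ : ∃ q : ℤ × ℤ,
      q = ((w.1 / (Int.gcd w.1 w.2 : ℤ), w.2 / (Int.gcd w.1 w.2 : ℤ)) : ℤ × ℤ) := ⟨_, rfl⟩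
  have e1 : w.1 = (Int.gcd w.1 w.2 : ℤ) * wh.1 := by
    rw [hwhdef]
    exact (Int.mul_ediv_cancel' (Int.gcd_dvd_left _ _)).symm
  have e2 : w.2 = (Int.gcd w.1 w.2 : ℤ) * wh.2 := by
    rw [hwhdef]
    exact (Int.mul_ediv_cancel' (Int.gcd_dvd_right _ _)).symm
  have hgw : (Int.gcd w.1 w.2 : ℤ) • wh = w := by
    refine Prod.ext ?_ ?_
    · rw [Prod.smul_fst, smul_eq_mul]; exact e1.symm
    · rw [Prod.smul_snd, smul_eq_mul]; exact e2.symm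
  have hgc : (Int.gcd w.1 w.2 : ℤ) * F wh = F w := by rw [← hFsmul, hgw]
  have hcpos : 0 < F wh := by nlinarith
  have hwhne : wh ≠ 0 := by
    intro h0
    rw [h0, smul_zero] at hgw
    exact hw hgw.symm
  have hwh' : wh.1 ≠ 0 ∨ wh.2 ≠ 0 := by
    by_contra hcc
    push_neg at hcc
    exact hwhne (Prod.ext hcc.1 hcc.2)
  have hinj : Function.Injective (fun m : ℤ => m • wh) := by
    intro m m' hmm
    simp only at hmm
    have h1 : m * wh.1 = m' * wh.1 := by
      have := congrArg Prod.fst hmm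
      simpa [Prod.smul_fst, smul_eq_mul] using this
    have h2 : m * wh.2 = m' * wh.2 := by
      have := congrArg Prod.snd hmm
      simpa [Prod.smul_snd, smul_eq_mul] using this
    rcases hwh' with h0 | h0
    · exact mul_right_cancel₀ h0 h1
    · exact mul_right_cancel₀ h0 h2
  have hSeq : S = (fun m : ℤ => m • wh) '' Set.Ico 1 (Int.gcd w.1 w.2 : ℤ) := by
    ext p
    rw [hchar]
    constructor
    · rintro ⟨hcol, hpos, hlt⟩
      obtain ⟨m, hmp⟩ := collinear_exists w p hw hcol
      rw [← hwhdef] at hmp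
      subst hmp
      rw [hFsmul] at hpos hlt
      rw [← hgc] at hlt
      have hm1 : 1 ≤ m := by nlinarith
      have hm2 : m < (Int.gcd w.1 w.2 : ℤ) := by nlinarith
      exact ⟨m, ⟨hm1, hm2⟩, rfl⟩
    · rintro ⟨m, ⟨hm1, hm2⟩, rfl⟩
      refine ⟨?_, ?_, ?_⟩
      · rw [Prod.smul_fst, Prod.smul_snd, smul_eq_mul, smul_eq_mul]
        linear_combination (m * wh.2) * e1 - (m * wh.1) * e2
      · rw [hFsmul]; nlinarith
      · rw [hFsmul, ← hgc]; nlinarith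
  rw [hSeq, Set.ncard_image_of_injective _ hinj, ← Finset.coe_Ico, Set.ncard_coe_finset,
    Int.card_Ico]
  omega

end Pick

namespace Pick

def A1 (x y : ℤ × ℤ) : Set (ℤ × ℤ) := {p | uu y p = 0 ∧ vv x p = 0}
def A2 (x y : ℤ × ℤ) : Set (ℤ × ℤ) :=
  {p | x.1 * p.2 = x.2 * p.1 ∧ 0 < uu y p ∧ uu y p < uu y x}
def A3 (x y : ℤ × ℤ) : Set (ℤ × ℤ) :=
  {p | y.1 * p.2 = y.2 * p.1 ∧ 0 < vv x p ∧ vv x p < vv x y}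
def A4 (x y : ℤ × ℤ) : Set (ℤ × ℤ) :=
  {p | (x + y).1 * p.2 = (x + y).2 * p.1 ∧ 0 < uu y p ∧ uu y p < uu y (x + y)}
def A5 (x y : ℤ × ℤ) : Set (ℤ × ℤ) :=
  {p | 0 < vv x p ∧ vv x p < uu y p ∧ uu y p < dd x y}
def A6 (x y : ℤ × ℤ) : Set (ℤ × ℤ) :=
  {p | 0 < uu y p ∧ uu y p < vv x p ∧ vv x p < dd x y}

lemma uu_add (y p q : ℤ × ℤ) : uu y (p + q) = uu y p + uu y q := by
  simp only [uu, Prod.fst_add, Prod.snd_add]; ring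

lemma vv_add (x p q : ℤ × ℤ) : vv x (p + q) = vv x p + vv x q := by
  simp only [vv, Prod.fst_add, Prod.snd_add]; ring

lemma uu_xy (x y : ℤ × ℤ) : uu y (x + y) = dd x y := by
  simp only [uu, dd, Prod.fst_add, Prod.snd_add]; ring

lemma vv_xy (x y : ℤ × ℤ) : vv x (x + y) = dd x y := by
  simp only [vv, dd, Prod.fst_add, Prod.snd_add]; ring

lemma hcol_x (x y p : ℤ × ℤ) : x.1 * p.2 = x.2 * p.1 ↔ vv x p = 0 := by
  simp only [vv]; omega

lemma hcol_y (x y p : ℤ × ℤ) : y.1 * p.2 = y.2 * p.1 ↔ uu y p = 0 := by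
  simp only [uu]
  constructor <;> intro h <;>
    [linarith [mul_comm y.1 p.2, mul_comm y.2 p.1];
     linarith [mul_comm y.1 p.2, mul_comm y.2 p.1]]

lemma hcol_xy (x y p : ℤ × ℤ) : (x + y).1 * p.2 = (x + y).2 * p.1 ↔ uu y p = vv x p := by
  simp only [uu, vv, Prod.fst_add, Prod.snd_add]
  constructor <;> intro h <;> nlinarith [h]

lemma mem_A2_lin (x y p : ℤ × ℤ) :
    p ∈ A2 x y ↔ (vv x p = 0 ∧ 0 < uu y p ∧ uu y p < dd x y) := by
  rw [A2, Set.mem_setOf_eq, hcol_x x y p]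
  exact Iff.rfl

lemma mem_A3_lin (x y p : ℤ × ℤ) :
    p ∈ A3 x y ↔ (uu y p = 0 ∧ 0 < vv x p ∧ vv x p < dd x y) := by
  rw [A3, Set.mem_setOf_eq, hcol_y x y p]
  exact Iff.rfl

lemma mem_A4_lin (x y p : ℤ × ℤ) :
    p ∈ A4 x y ↔ (uu y p = vv x p ∧ 0 < uu y p ∧ uu y p < dd x y) := by
  rw [A4, Set.mem_setOf_eq, hcol_xy x y p, uu_xy]

lemma partition (x y : ℤ × ℤ) (hd : 0 < dd x y) :
    Pset x y = A1 x y ∪ (A2 x y ∪ (A3 x y ∪ (A4 x y ∪ (A5 x y ∪ A6 x y)))) := by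
  ext p
  simp only [Pset, Set.mem_setOf_eq, Set.mem_union, mem_A2_lin, mem_A3_lin, mem_A4_lin,
    A1, A5, A6]
  omega

end Pick

namespace Pick

lemma uu_zero (y : ℤ × ℤ) : uu y 0 = 0 := by simp [uu]
lemma vv_zero (x : ℤ × ℤ) : vv x 0 = 0 := by simp [vv]

lemma A1_eq (x y : ℤ × ℤ) (hd : dd x y ≠ 0) : A1 x y = {0} := by
  ext p
  simp only [A1, Set.mem_setOf_eq, Set.mem_singleton_iff]
  constructor
  · rintro ⟨h1, h2⟩
    exact uv_inj x y hd (by rw [h1, uu_zero]) (by rw [h2, vv_zero])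
  · rintro rfl
    exact ⟨uu_zero y, vv_zero x⟩

lemma A6_eq_image (x y : ℤ × ℤ) : A6 x y = (fun p => x + y - p) '' A5 x y := by
  ext p
  simp only [A6, A5, Set.mem_setOf_eq, Set.mem_image]
  constructor
  · intro hp
    refine ⟨x + y - p, ?_, by abel⟩
    have e1 : uu y (x + y - p) = dd x y - uu y p := by rw [uu_sub, uu_xy]
    have e2 : vv x (x + y - p) = dd x y - vv x p := by rw [vv_sub, vv_xy]
    rw [e1, e2]
    omega
  · rintro ⟨q, hq, rfl⟩
    have e1 : uu y (x + y - q) = dd x y - uu y q := by rw [uu_sub, uu_xy]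
    have e2 : vv x (x + y - q) = dd x y - vv x q := by rw [vv_sub, vv_xy]
    rw [e1, e2]
    omega

lemma Pset_finite (x y : ℤ × ℤ) (hd : dd x y ≠ 0) : (Pset x y).Finite := by
  have hsub : Pset x y ⊆
      (fun p => (uu y p, vv x p)) ⁻¹' (Set.Ico 0 (dd x y) ×ˢ Set.Ico 0 (dd x y)) := by
    rintro p ⟨h1, h2, h3, h4⟩
    simp only [Set.mem_preimage, Set.prodMk_mem_set_prod_eq, Set.mem_Ico]
    exact ⟨⟨h1, h2⟩, h3, h4⟩
  refine Set.Finite.subset (Set.Finite.preimage ?_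
    ((Set.finite_Ico _ _).prod (Set.finite_Ico _ _))) hsub
  intro p _ q _ hpq
  rw [Prod.ext_iff] at hpq
  exact uv_inj x y hd hpq.1 hpq.2

lemma count_main (x y : ℤ × ℤ) (hd : 0 < dd x y) :
    (dd x y).natAbs + 2 =
      Int.gcd x.1 x.2 + Int.gcd y.1 y.2 + Int.gcd (x + y).1 (x + y).2
        + 2 * (A5 x y).ncard := by
  have hd' : dd x y ≠ 0 := hd.ne'
  have hx : x ≠ 0 := by
    rintro rfl
    simp [dd] at hd'
  have hy : y ≠ 0 := by
    rintro rfl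
    simp [dd] at hd'
  have hxy : x + y ≠ 0 := by
    intro h0
    apply hd'
    have hyx : y = -x := by
      have := congrArg (fun z => z - x) h0
      simpa [add_sub_cancel_left] using this
    rw [hyx]
    simp only [dd, Prod.fst_neg, Prod.snd_neg]
    ring
  have hgx : Int.gcd x.1 x.2 ≠ 0 := by
    rw [Ne, Int.gcd_eq_zero_iff]
    rintro ⟨e1, e2⟩
    exact hx (Prod.ext e1 e2)
  have hgy : Int.gcd y.1 y.2 ≠ 0 := by
    rw [Ne, Int.gcd_eq_zero_iff]
    rintro ⟨e1, e2⟩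
    exact hy (Prod.ext e1 e2)
  have hgxy : Int.gcd (x + y).1 (x + y).2 ≠ 0 := by
    rw [Ne, Int.gcd_eq_zero_iff]
    rintro ⟨e1, e2⟩
    exact hxy (Prod.ext e1 e2)
  have c2 : (A2 x y).ncard = Int.gcd x.1 x.2 - 1 :=
    seg_count x hx _ (uu y) (uu_smul y) hd (fun p => Iff.rfl)
  have c3 : (A3 x y).ncard = Int.gcd y.1 y.2 - 1 :=
    seg_count y hy _ (vv x) (vv_smul x) hd (fun p => Iff.rfl)
  have c4 : (A4 x y).ncard = Int.gcd (x + y).1 (x + y).2 - 1 :=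
    seg_count (x + y) hxy _ (uu y) (uu_smul y) (by rw [uu_xy]; exact hd) (fun p => Iff.rfl)
  have c1 : (A1 x y).ncard = 1 := by
    rw [A1_eq x y hd']
    exact Set.ncard_singleton 0
  have c6 : (A6 x y).ncard = (A5 x y).ncard := by
    rw [A6_eq_image x y]
    apply Set.ncard_image_of_injective
    intro p q hpq
    simpa [sub_right_injective] using sub_right_injective hpq
  have hPfin := Pset_finite x y hd'
  have sub1 : A1 x y ⊆ Pset x y := by
    intro p hp
    simp only [A1, Set.mem_setOf_eq] at hp
    exact ⟨by omega, by omega, by omega, by omega⟩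
  have sub2 : A2 x y ⊆ Pset x y := by
    intro p hp
    rw [mem_A2_lin] at hp
    exact ⟨by omega, by omega, by omega, by omega⟩
  have sub3 : A3 x y ⊆ Pset x y := by
    intro p hp
    rw [mem_A3_lin] at hp
    exact ⟨by omega, by omega, by omega, by omega⟩
  have sub4 : A4 x y ⊆ Pset x y := by
    intro p hp
    rw [mem_A4_lin] at hp
    exact ⟨by omega, by omega, by omega, by omega⟩
  have sub5 : A5 x y ⊆ Pset x y := by
    intro p hp
    simp only [A5, Set.mem_setOf_eq] at hp
    exact ⟨by omega, by omega, by omega, by omega⟩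
  have sub6 : A6 x y ⊆ Pset x y := by
    intro p hp
    simp only [A6, Set.mem_setOf_eq] at hp
    exact ⟨by omega, by omega, by omega, by omega⟩
  have f1 := hPfin.subset sub1
  have f2 := hPfin.subset sub2
  have f3 := hPfin.subset sub3
  have f4 := hPfin.subset sub4
  have f5 := hPfin.subset sub5
  have f6 := hPfin.subset sub6
  have d5 : Disjoint (A5 x y) (A6 x y) := by
    rw [Set.disjoint_left]
    intro p hp hq
    simp only [A5, A6, Set.mem_setOf_eq] at hp hq
    omega
  have d4 : Disjoint (A4 x y) (A5 x y ∪ A6 x y) := by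
    rw [Set.disjoint_left]
    intro p hp hq
    rw [mem_A4_lin] at hp
    simp only [A5, A6, Set.mem_setOf_eq, Set.mem_union] at hq
    omega
  have d3 : Disjoint (A3 x y) (A4 x y ∪ (A5 x y ∪ A6 x y)) := by
    rw [Set.disjoint_left]
    intro p hp hq
    rw [mem_A3_lin] at hp
    simp only [A5, A6, Set.mem_setOf_eq, Set.mem_union, mem_A4_lin] at hq
    omega
  have d2 : Disjoint (A2 x y) (A3 x y ∪ (A4 x y ∪ (A5 x y ∪ A6 x y))) := by
    rw [Set.disjoint_left]
    intro p hp hq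
    rw [mem_A2_lin] at hp
    simp only [A5, A6, Set.mem_setOf_eq, Set.mem_union, mem_A3_lin, mem_A4_lin] at hq
    omega
  have d1 : Disjoint (A1 x y) (A2 x y ∪ (A3 x y ∪ (A4 x y ∪ (A5 x y ∪ A6 x y)))) := by
    rw [Set.disjoint_left]
    intro p hp hq
    simp only [A1, Set.mem_setOf_eq] at hp
    simp only [A5, A6, Set.mem_setOf_eq, Set.mem_union, mem_A2_lin, mem_A3_lin,
      mem_A4_lin] at hq
    omega
  have hP := card_Pset x y hd
  rw [partition x y hd,
    Set.ncard_union_eq d1 f1 (f2.union (f3.union (f4.union (f5.union f6)))),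
    Set.ncard_union_eq d2 f2 (f3.union (f4.union (f5.union f6))),
    Set.ncard_union_eq d3 f3 (f4.union (f5.union f6)),
    Set.ncard_union_eq d4 f4 (f5.union f6),
    Set.ncard_union_eq d5 f5 f6] at hP
  omega

end Pick

namespace Pick

def UR (y : ℤ × ℤ) (q : ℝ × ℝ) : ℝ := q.1 * (y.2 : ℝ) - q.2 * (y.1 : ℝ)
def VR (x : ℤ × ℤ) (q : ℝ × ℝ) : ℝ := (x.1 : ℝ) * q.2 - (x.2 : ℝ) * q.1

lemma UR_cont (y : ℤ × ℤ) : Continuous (UR y) := by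
  unfold UR; fun_prop

lemma VR_cont (x : ℤ × ℤ) : Continuous (VR x) := by
  unfold VR; fun_prop

lemma UR_comb (y : ℤ × ℤ) (a b : ℝ) (q r : ℝ × ℝ) :
    UR y (a • q + b • r) = a * UR y q + b * UR y r := by
  simp only [UR, Prod.fst_add, Prod.snd_add, Prod.smul_fst, Prod.smul_snd, smul_eq_mul]
  ring

lemma VR_comb (x : ℤ × ℤ) (a b : ℝ) (q r : ℝ × ℝ) :
    VR x (a • q + b • r) = a * VR x q + b * VR x r := by
  simp only [VR, Prod.fst_add, Prod.snd_add, Prod.smul_fst, Prod.smul_snd, smul_eq_mul]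
  ring

lemma UR_toR2 (y p : ℤ × ℤ) : UR y (toR2 p) = ((p.1 * y.2 - p.2 * y.1 : ℤ) : ℝ) := by
  simp only [UR, toR2]; push_cast; ring

lemma VR_toR2 (x p : ℤ × ℤ) : VR x (toR2 p) = ((x.1 * p.2 - x.2 * p.1 : ℤ) : ℝ) := by
  simp only [VR, toR2]; push_cast; ring

/-- The closed triangle as an intersection of half planes. -/
def Tcl (x y : ℤ × ℤ) : Set (ℝ × ℝ) :=
  {q | 0 ≤ VR x q ∧ VR x q ≤ UR y q ∧ UR y q ≤ ((x.1 * y.2 - x.2 * y.1 : ℤ) : ℝ)}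

lemma Tcl_convex (x y : ℤ × ℤ) : Convex ℝ (Tcl x y) := by
  rintro q ⟨h1, h2, h3⟩ r ⟨h4, h5, h6⟩ a b ha hb hab
  refine ⟨?_, ?_, ?_⟩
  · rw [VR_comb]
    have := mul_nonneg ha h1
    have := mul_nonneg hb h4
    linarith
  · rw [VR_comb, UR_comb]
    have := mul_le_mul_of_nonneg_left h2 ha
    have := mul_le_mul_of_nonneg_left h5 hb
    linarith
  · rw [UR_comb]
    have := mul_le_mul_of_nonneg_left h3 ha
    have := mul_le_mul_of_nonneg_left h6 hb
    nlinarith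
end Pick

namespace Pick

lemma VR_x (x : ℤ × ℤ) : VR x (toR2 x) = 0 := by
  rw [VR_toR2]
  simp only [Int.cast_eq_zero]
  ring

lemma UR_x (x y : ℤ × ℤ) : UR y (toR2 x) = ((x.1 * y.2 - x.2 * y.1 : ℤ) : ℝ) := UR_toR2 y x

lemma UR_xy (x y : ℤ × ℤ) : UR y (toR2 (x + y)) = ((x.1 * y.2 - x.2 * y.1 : ℤ) : ℝ) := by
  rw [UR_toR2]
  congr 1
  simp only [Prod.fst_add, Prod.snd_add]
  ring

lemma VR_xy (x y : ℤ × ℤ) : VR x (toR2 (x + y)) = ((x.1 * y.2 - x.2 * y.1 : ℤ) : ℝ) := by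
  rw [VR_toR2]
  congr 1
  simp only [Prod.fst_add, Prod.snd_add]
  ring

lemma VR_y (x y : ℤ × ℤ) : VR x (toR2 y) = ((x.1 * y.2 - x.2 * y.1 : ℤ) : ℝ) := VR_toR2 x y

lemma UR_zero (y : ℤ × ℤ) : UR y 0 = 0 := by simp [UR]
lemma VR_zero (x : ℤ × ℤ) : VR x 0 = 0 := by simp [VR]

lemma tri_eq_Tcl (x y : ℤ × ℤ) (hd : 0 < x.1 * y.2 - x.2 * y.1) :
    tri x y = Tcl x y := by
  have hD : (0 : ℝ) < ((x.1 * y.2 - x.2 * y.1 : ℤ) : ℝ) := by exact_mod_cast hd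
  apply le_antisymm
  · apply convexHull_min _ (Tcl_convex x y)
    intro z hz
    simp only [Set.mem_insert_iff, Set.mem_singleton_iff] at hz
    rcases hz with rfl | rfl | rfl
    · exact ⟨le_of_eq (VR_zero x).symm, by rw [VR_zero, UR_zero], by rw [UR_zero]; exact hD.le⟩
    · exact ⟨le_of_eq (VR_x x).symm, by rw [VR_x, UR_x]; exact hD.le, by rw [UR_x]⟩
    · exact ⟨by rw [VR_xy]; exact hD.le, by rw [VR_xy, UR_xy], by rw [UR_xy]⟩
  · intro q hq
    obtain ⟨h1, h2, h3⟩ := hq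
    set D : ℝ := ((x.1 * y.2 - x.2 * y.1 : ℤ) : ℝ) with hD'
    set s : ℝ := UR y q / D with hs
    set t : ℝ := VR x q / D with ht
    have e1 : D * q.1 = UR y q * (x.1 : ℝ) + VR x q * (y.1 : ℝ) := by
      rw [hD']; simp only [UR, VR]; push_cast; ring
    have e2 : D * q.2 = UR y q * (x.2 : ℝ) + VR x q * (y.2 : ℝ) := by
      rw [hD']; simp only [UR, VR]; push_cast; ring
    have ht0 : 0 ≤ t := by rw [ht]; positivity
    have hts : t ≤ s := by
      rw [ht, hs]
      gcongr
    have hs1 : s ≤ 1 := by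
      rw [hs]
      rw [div_le_one hD]
      exact h3
    have hqid : q = (s - t) • toR2 x + t • toR2 (x + y) := by
      refine Prod.ext ?_ ?_
      · simp only [Prod.fst_add, Prod.snd_add, Prod.smul_fst, Prod.smul_snd, smul_eq_mul,
          toR2, hs, ht]
        push_cast
        field_simp
        linear_combination e1
      · simp only [Prod.fst_add, Prod.snd_add, Prod.smul_fst, Prod.smul_snd, smul_eq_mul,
          toR2, hs, ht]
        push_cast
        field_simp
        linear_combination e2
    rcases eq_or_lt_of_le (le_trans ht0 hts) with hs0 | hs0
    · -- s = 0, so q = 0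
      have hU0 : UR y q = 0 := by
        have : s = 0 := hs0.symm
        rw [hs] at this
        field_simp at this
        simpa using this
      have hV0 : VR x q = 0 := le_antisymm (by rw [← hU0]; exact h2) h1
      have hq0 : q = 0 := by
        refine Prod.ext ?_ ?_
        · have := e1
          rw [hU0, hV0] at this
          simp only [zero_mul, add_zero] at this
          have := (mul_eq_zero.1 this).resolve_left hD.ne'
          simpa using this
        · have := e2
          rw [hU0, hV0] at this
          simp only [zero_mul, add_zero] at this
          have := (mul_eq_zero.1 this).resolve_left hD.ne'
          simpa using this
      rw [hq0, tri]
      exact subset_convexHull ℝ _ (by simp)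
    · -- 0 < s
      rw [tri, convexHull_insert ⟨toR2 x, by simp⟩, mem_convexJoin]
      refine ⟨0, rfl, (1 - t/s) • toR2 x + (t/s) • toR2 (x + y), ?_, ?_⟩
      · rw [convexHull_pair]
        refine ⟨1 - t/s, t/s, ?_, by positivity, by ring, rfl⟩
        have : t / s ≤ 1 := by
          rw [div_le_one hs0]
          exact hts
        linarith
      · refine ⟨1 - s, s, by linarith, hs0.le, by ring, ?_⟩
        rw [smul_zero, zero_add, smul_add, smul_smul, smul_smul]
        rw [show s * (1 - t/s) = s - t from by field_simp, show s * (t/s) = t from by field_simp]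
        exact hqid.symm

end Pick

namespace Pick

def W (x y : ℤ × ℤ) : Set (ℝ × ℝ) :=
  {q | 0 < VR x q ∧ VR x q < UR y q ∧ UR y q < ((x.1 * y.2 - x.2 * y.1 : ℤ) : ℝ)}

lemma W_open (x y : ℤ × ℤ) : IsOpen (W x y) := by
  have h1 : IsOpen {q : ℝ × ℝ | 0 < VR x q} := isOpen_lt continuous_const (VR_cont x)
  have h2 : IsOpen {q : ℝ × ℝ | VR x q < UR y q} := isOpen_lt (VR_cont x) (UR_cont y)
  have h3 : IsOpen {q : ℝ × ℝ | UR y q < ((x.1 * y.2 - x.2 * y.1 : ℤ) : ℝ)} :=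
    isOpen_lt (UR_cont y) continuous_const
  exact h1.inter (h2.inter h3)

lemma UR_add_smul (y : ℤ × ℤ) (q : ℝ × ℝ) (c : ℝ) (r : ℝ × ℝ) :
    UR y (q + c • r) = UR y q + c * UR y r := by
  simpa using UR_comb y 1 c q r

lemma VR_add_smul (x : ℤ × ℤ) (q : ℝ × ℝ) (c : ℝ) (r : ℝ × ℝ) :
    VR x (q + c • r) = VR x q + c * VR x r := by
  simpa using VR_comb x 1 c q r

lemma UR_neg' (y : ℤ × ℤ) (r : ℝ × ℝ) : UR y (-r) = -(UR y r) := by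
  simp only [UR, Prod.fst_neg, Prod.snd_neg]; ring

lemma VR_neg' (x : ℤ × ℤ) (r : ℝ × ℝ) : VR x (-r) = -(VR x r) := by
  simp only [VR, Prod.fst_neg, Prod.snd_neg]; ring

lemma interior_Tcl (x y : ℤ × ℤ) (hd : 0 < x.1 * y.2 - x.2 * y.1) :
    interior (Tcl x y) = W x y := by
  have hD : (0 : ℝ) < ((x.1 * y.2 - x.2 * y.1 : ℤ) : ℝ) := by exact_mod_cast hd
  apply le_antisymm
  · intro q hq
    have hqT : q ∈ Tcl x y := interior_subset hq
    obtain ⟨h1, h2, h3⟩ := hqT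
    rw [mem_interior_iff_mem_nhds, Metric.mem_nhds_iff] at hq
    obtain ⟨ε, hε, hball⟩ := hq
    have hcpos : ∀ r : ℝ × ℝ, 0 < ε / (2 * (‖r‖ + 1)) := by
      intro r
      have := norm_nonneg r
      positivity
    have hpert : ∀ r : ℝ × ℝ, q + (ε / (2 * (‖r‖ + 1))) • r ∈ Tcl x y := by
      intro r
      apply hball
      rw [Metric.mem_ball, dist_eq_norm]
      have he : q + (ε / (2 * (‖r‖ + 1))) • r - q = (ε / (2 * (‖r‖ + 1))) • r := by abel
      rw [he, norm_smul, Real.norm_eq_abs, abs_of_pos (hcpos r)]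
      have hn : 0 ≤ ‖r‖ := norm_nonneg r
      have h2r : 0 < 2 * (‖r‖ + 1) := by positivity
      rw [div_mul_eq_mul_div, div_lt_iff₀ h2r]
      nlinarith
    have hV : VR x q ≠ 0 := by
      intro h0
      have hp := hpert (-(toR2 y))
      obtain ⟨hp1, -, -⟩ := hp
      rw [VR_add_smul, VR_neg', VR_y, h0] at hp1
      have := mul_pos (hcpos (-(toR2 y))) hD
      linarith
    have hUV : VR x q ≠ UR y q := by
      intro h0
      have hp := hpert (-(toR2 x))
      obtain ⟨-, hp2, -⟩ := hp
      rw [VR_add_smul, UR_add_smul, VR_neg', UR_neg', VR_x, UR_x, h0] at hp2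
      have := mul_pos (hcpos (-(toR2 x))) hD
      linarith
    have hU : UR y q ≠ ((x.1 * y.2 - x.2 * y.1 : ℤ) : ℝ) := by
      intro h0
      have hp := hpert (toR2 x)
      obtain ⟨-, -, hp3⟩ := hp
      rw [UR_add_smul, UR_x, h0] at hp3
      have := mul_pos (hcpos (toR2 x)) hD
      linarith
    exact ⟨h1.lt_of_ne (Ne.symm hV), h2.lt_of_ne hUV, h3.lt_of_ne hU⟩
  · exact interior_maximal (fun q hq => ⟨hq.1.le, hq.2.1.le, hq.2.2.le⟩) (W_open x y)

end Pick


namespace Pick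

lemma interior_tri (x y : ℤ × ℤ) (hd : 0 < x.1 * y.2 - x.2 * y.1) :
    {p : ℤ × ℤ | toR2 p ∈ interior (tri x y)} = A5 x y := by
  ext p
  rw [Set.mem_setOf_eq, tri_eq_Tcl x y hd, interior_Tcl x y hd]
  rw [W, Set.mem_setOf_eq, UR_toR2, VR_toR2]
  have e1 : (p.1 * y.2 - p.2 * y.1 : ℤ) = uu y p := rfl
  have e2 : (x.1 * p.2 - x.2 * p.1 : ℤ) = vv x p := rfl
  rw [e1, e2]
  constructor
  · rintro ⟨a, b, c⟩
    exact ⟨by exact_mod_cast a, by exact_mod_cast b, by exact_mod_cast c⟩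
  · rintro ⟨a, b, c⟩
    exact ⟨by exact_mod_cast a, by exact_mod_cast b, by exact_mod_cast c⟩

theorem pick_pos (x y : ℤ × ℤ) (hd : 0 < x.1 * y.2 - x.2 * y.1) :
    ((x.1 * y.2 - x.2 * y.1).natAbs : ℤ) =
      (Int.gcd x.1 x.2 : ℤ) + (Int.gcd y.1 y.2 : ℤ) + (Int.gcd (x + y).1 (x + y).2 : ℤ) - 2 +
        2 * ({p : ℤ × ℤ | toR2 p ∈ interior (tri x y)}.ncard : ℤ) := by
  have hcm := count_main x y hd
  rw [interior_tri x y hd]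
  have h0 : dd x y = x.1 * y.2 - x.2 * y.1 := rfl
  rw [h0] at hcm
  omega

lemma swap_linear : IsLinearMap ℝ (Prod.swap : ℝ × ℝ → ℝ × ℝ) := by
  constructor
  · intro a b; rfl
  · intro c a; rfl

lemma tri_swap (x y : ℤ × ℤ) :
    tri (x.2, x.1) (y.2, y.1) = Prod.swap '' tri x y := by
  rw [tri, tri, swap_linear.image_convexHull]
  congr 1
  rw [Set.image_insert_eq, Set.image_insert_eq, Set.image_singleton]
  rfl

lemma interior_swap_ncard (x y : ℤ × ℤ) :
    {p : ℤ × ℤ | toR2 p ∈ interior (tri (x.2, x.1) (y.2, y.1))}.ncard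
      = {p : ℤ × ℤ | toR2 p ∈ interior (tri x y)}.ncard := by
  have hσ : interior (tri (x.2, x.1) (y.2, y.1)) = Prod.swap '' interior (tri x y) := by
    rw [tri_swap]
    have := (Homeomorph.prodComm ℝ ℝ).image_interior (tri x y)
    simpa [Homeomorph.prodComm] using this.symm
  have hset : {p : ℤ × ℤ | toR2 p ∈ interior (tri (x.2, x.1) (y.2, y.1))}
      = Prod.swap '' {p : ℤ × ℤ | toR2 p ∈ interior (tri x y)} := by
    ext p
    rw [Set.mem_setOf_eq, hσ]
    constructor
    · intro hp
      obtain ⟨r, hr, hrp⟩ := hp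
      refine ⟨p.swap, ?_, by simp⟩
      rw [Set.mem_setOf_eq]
      have hr2 : r = (toR2 p).swap := by
        simpa using congrArg Prod.swap hrp
      rw [hr2] at hr
      exact hr
    · rintro ⟨r, hr, rfl⟩
      exact ⟨toR2 r, hr, rfl⟩
  rw [hset, Set.ncard_image_of_injective _ Prod.swap_injective]

end Pick

/-- Pick's formula: for non-collinear lattice vectors `x, y`,
`|det(x,y)| = deg x + deg y + deg (x+y) - 2 + 2 I` where `I` is the number
of interior lattice points of the triangle with vertices `0, x, x+y`. -/
theorem pick_formula (x y : ℤ × ℤ) (h : x.1 * y.2 - x.2 * y.1 ≠ 0) :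
    ((x.1 * y.2 - x.2 * y.1).natAbs : ℤ) =
      (Int.gcd x.1 x.2 : ℤ) + (Int.gcd y.1 y.2 : ℤ) + (Int.gcd (x + y).1 (x + y).2 : ℤ) - 2 +
        2 * ({p : ℤ × ℤ | toR2 p ∈ interior (tri x y)}.ncard : ℤ) := by
  rcases h.lt_or_gt with hneg | hpos
  · have hd' : 0 < (x.2, x.1).1 * (y.2, y.1).2 - (x.2, x.1).2 * (y.2, y.1).1 := by
      simp only
      linarith
    have hres := Pick.pick_pos (x.2, x.1) (y.2, y.1) hd'
    rw [Pick.interior_swap_ncard x y] at hres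
    have e1 : Int.gcd (x.2, x.1).1 (x.2, x.1).2 = Int.gcd x.1 x.2 := Int.gcd_comm _ _
    have e2 : Int.gcd (y.2, y.1).1 (y.2, y.1).2 = Int.gcd y.1 y.2 := Int.gcd_comm _ _
    have e3 : Int.gcd ((x.2, x.1) + (y.2, y.1)).1 ((x.2, x.1) + (y.2, y.1)).2
        = Int.gcd (x + y).1 (x + y).2 := by
      have : ((x.2, x.1) + (y.2, y.1) : ℤ × ℤ) = ((x + y).2, (x + y).1) := rfl
      rw [this]
      exact Int.gcd_comm _ _
    rw [e1, e2, e3] at hres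
    have e4 : ((x.2, x.1).1 * (y.2, y.1).2 - (x.2, x.1).2 * (y.2, y.1).1).natAbs
        = (x.1 * y.2 - x.2 * y.1).natAbs := by
      simp only
      omega
    rw [e4] at hres
    linarith [hres]
  · exact Pick.pick_pos x y hpos
end

section
/- Let x, y ∈ ℤ² be non-collinear with deg(x) = 1. If the triangle with vertices 0, x, x+y contains no lattice point in its interior, then deg(y) = 1 or deg(x+y) = 1. -/
lemma mem_interior_tri (x y : ℤ × ℤ) (h : x.1 * y.2 - x.2 * y.1 ≠ 0)
    (w : Fin 3 → ℝ) (hw : w 0 + w 1 + w 2 = 1) (hpos : ∀ i, 0 < w i) :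
    w 1 • toR2 x + w 2 • toR2 (x + y) ∈ interior (tri x y) := by
  set a : ℝ × ℝ := toR2 x with ha
  set c : ℝ × ℝ := toR2 (x + y) with hc
  have hdet : (x.1 : ℝ) * y.2 - x.2 * y.1 ≠ 0 := by
    intro hz
    apply h
    exact_mod_cast hz
  have hind : AffineIndependent ℝ ![(0 : ℝ × ℝ), a, c] := by
    rw [affineIndependent_iff_not_collinear_set]
    intro hcol
    rw [collinear_iff_of_mem (Set.mem_insert _ _)] at hcol
    obtain ⟨v, hv⟩ := hcol
    obtain ⟨r, hr⟩ := hv a (by simp)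
    obtain ⟨s, hs⟩ := hv c (by simp)
    simp only [vadd_eq_add, add_zero] at hr hs
    have h1 : (x.1 : ℝ) = r * v.1 := by rw [ha] at hr; simpa [toR2, Prod.ext_iff] using congrArg Prod.fst hr
    have h2 : (x.2 : ℝ) = r * v.2 := by rw [ha] at hr; simpa [toR2, Prod.ext_iff] using congrArg Prod.snd hr
    have h3 : ((x + y).1 : ℝ) = s * v.1 := by rw [hc] at hs; simpa [toR2, Prod.ext_iff] using congrArg Prod.fst hs
    have h4 : ((x + y).2 : ℝ) = s * v.2 := by rw [hc] at hs; simpa [toR2, Prod.ext_iff] using congrArg Prod.snd hs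
    apply hdet
    have e1 : ((x + y).1 : ℝ) = x.1 + y.1 := by push_cast [Prod.fst_add]; ring
    have e2 : ((x + y).2 : ℝ) = x.2 + y.2 := by push_cast [Prod.snd_add]; ring
    linear_combination (-(x.1:ℝ)) * e2 + (x.2:ℝ) * e1 + (x.1:ℝ) * h4 - (x.2:ℝ) * h3 + s*v.2*h1 - s*v.1*h2
  have htot : affineSpan ℝ (Set.range ![(0 : ℝ × ℝ), a, c]) = ⊤ := by
    rw [hind.affineSpan_eq_top_iff_card_eq_finrank_add_one]
    simp
  let b : AffineBasis (Fin 3) ℝ (ℝ × ℝ) := ⟨![(0 : ℝ × ℝ), a, c], hind, htot⟩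
  have hrange : Set.range ⇑b = {(0 : ℝ × ℝ), a, c} := by
    show Set.range ![(0 : ℝ × ℝ), a, c] = _
    ext p
    simp [Matrix.range_cons, Matrix.range_empty]
    tauto
  have htri : tri x y = convexHull ℝ (Set.range ⇑b) := by
    rw [hrange]; rfl
  rw [htri, b.interior_convexHull]
  have hcomb : w 1 • a + w 2 • c = Finset.univ.affineCombination ℝ ⇑b w := by
    rw [Finset.affineCombination_eq_linear_combination _ _ _ (by simpa [Fin.sum_univ_three] using hw)]
    show _ = ∑ i : Fin 3, w i • (![(0 : ℝ × ℝ), a, c]) i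
    simp [Fin.sum_univ_three]
  rw [Set.mem_setOf_eq, hcomb]
  intro i
  rw [b.coord_apply_combination_of_mem (Finset.mem_univ i) (by simpa [Fin.sum_univ_three] using hw)]
  exact hpos i

/-- If `x, y` are non-collinear, `deg x = 1` and the triangle with vertices `0, x, x+y`
has no interior lattice point, then `deg y = 1` or `deg (x+y) = 1`. -/
theorem deg_one_of_no_interior_point (x y : ℤ × ℤ)
    (h : x.1 * y.2 - x.2 * y.1 ≠ 0) (hx : Int.gcd x.1 x.2 = 1)
    (hempty : ∀ p : ℤ × ℤ, toR2 p ∉ interior (tri x y)) :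
    Int.gcd y.1 y.2 = 1 ∨ Int.gcd (x + y).1 (x + y).2 = 1 := by
  by_contra hcon
  push_neg at hcon
  obtain ⟨hy1, hxy1⟩ := hcon
  set d2 := Int.gcd y.1 y.2 with hd2def
  set d3 := Int.gcd (x + y).1 (x + y).2 with hd3def
  -- y ≠ 0
  have hy0 : ¬(y.1 = 0 ∧ y.2 = 0) := by
    rintro ⟨h1, h2⟩; exact h (by rw [h1, h2]; ring)
  have hd2pos : d2 ≠ 0 := by
    intro h0
    exact hy0 (Int.gcd_eq_zero_iff.mp h0)
  have hxy0 : ¬((x + y).1 = 0 ∧ (x + y).2 = 0) := by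
    rintro ⟨h1, h2⟩
    simp only [Prod.fst_add, Prod.snd_add] at h1 h2
    apply h
    have e1 : y.1 = -x.1 := by linarith
    have e2 : y.2 = -x.2 := by linarith
    rw [e1, e2]; ring
  have hd3pos : d3 ≠ 0 := by
    intro h0
    exact hxy0 (Int.gcd_eq_zero_iff.mp h0)
  have hd2two : 2 ≤ d2 := by omega
  have hd3two : 2 ≤ d3 := by omega
  -- coprimality of d2 and d3
  have hcop : Nat.Coprime d2 d3 := by
    set g := Nat.gcd d2 d3 with hg
    have hgy1 : (g : ℤ) ∣ y.1 := dvd_trans (Int.natCast_dvd_natCast.mpr (Nat.gcd_dvd_left _ _)) (Int.gcd_dvd_left _ _)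
    have hgy2 : (g : ℤ) ∣ y.2 := dvd_trans (Int.natCast_dvd_natCast.mpr (Nat.gcd_dvd_left _ _)) (Int.gcd_dvd_right _ _)
    have hgz1 : (g : ℤ) ∣ (x + y).1 := dvd_trans (Int.natCast_dvd_natCast.mpr (Nat.gcd_dvd_right _ _)) (Int.gcd_dvd_left _ _)
    have hgz2 : (g : ℤ) ∣ (x + y).2 := dvd_trans (Int.natCast_dvd_natCast.mpr (Nat.gcd_dvd_right _ _)) (Int.gcd_dvd_right _ _)
    have hgx1 : (g : ℤ) ∣ x.1 := by
      have : x.1 = (x + y).1 - y.1 := by simp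
      rw [this]; exact dvd_sub hgz1 hgy1
    have hgx2 : (g : ℤ) ∣ x.2 := by
      have : x.2 = (x + y).2 - y.2 := by simp
      rw [this]; exact dvd_sub hgz2 hgy2
    have : (g : ℤ) ∣ (Int.gcd x.1 x.2 : ℤ) := Int.dvd_coe_gcd hgx1 hgx2
    rw [hx] at this
    exact_mod_cast Int.eq_one_of_dvd_one (by positivity) this
  have hne : d2 ≠ d3 := by
    intro he
    rw [he, Nat.Coprime, Nat.gcd_self] at hcop
    omega
  -- primitive vectors
  obtain ⟨y1', hy1'⟩ : (d2 : ℤ) ∣ y.1 := Int.gcd_dvd_left _ _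
  obtain ⟨y2', hy2'⟩ : (d2 : ℤ) ∣ y.2 := Int.gcd_dvd_right _ _
  obtain ⟨z1', hz1'⟩ : (d3 : ℤ) ∣ (x + y).1 := Int.gcd_dvd_left _ _
  obtain ⟨z2', hz2'⟩ : (d3 : ℤ) ∣ (x + y).2 := Int.gcd_dvd_right _ _
  have hd2R : (d2 : ℝ) ≠ 0 := by exact_mod_cast hd2pos
  have hd3R : (d3 : ℝ) ≠ 0 := by exact_mod_cast hd3pos
  have hd2R2 : (2 : ℝ) ≤ (d2 : ℝ) := by exact_mod_cast hd2two
  have hd3R2 : (2 : ℝ) ≤ (d3 : ℝ) := by exact_mod_cast hd3two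
  have A1 : (y1' : ℝ) = y.1 / d2 := by
    rw [eq_div_iff hd2R]; exact_mod_cast (by linarith [hy1'] : y1' * (d2:ℤ) = y.1)
  have A2 : (y2' : ℝ) = y.2 / d2 := by
    rw [eq_div_iff hd2R]; exact_mod_cast (by linarith [hy2'] : y2' * (d2:ℤ) = y.2)
  have B1 : (z1' : ℝ) = ((x.1 : ℝ) + y.1) / d3 := by
    rw [eq_div_iff hd3R]
    have : ((x+y).1 : ℝ) = z1' * d3 := by exact_mod_cast (by linarith [hz1'] : (x+y).1 = z1' * (d3:ℤ))
    rw [← this]; push_cast [Prod.fst_add]; ring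
  have B2 : (z2' : ℝ) = ((x.2 : ℝ) + y.2) / d3 := by
    rw [eq_div_iff hd3R]
    have : ((x+y).2 : ℝ) = z2' * d3 := by exact_mod_cast (by linarith [hz2'] : (x+y).2 = z2' * (d3:ℤ))
    rw [← this]; push_cast [Prod.snd_add]; ring
  rcases lt_or_gt_of_ne hne with hlt | hgt
  · -- d2 < d3 : interior point x + y' - z'
    set p : ℤ × ℤ := (x.1 + y1' - z1', x.2 + y2' - z2') with hp
    set w : Fin 3 → ℝ := ![1/(d3:ℝ), 1 - 1/(d2:ℝ), 1/(d2:ℝ) - 1/(d3:ℝ)] with hwdef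
    have hlR : (d2 : ℝ) < d3 := by exact_mod_cast hlt
    have hw : w 0 + w 1 + w 2 = 1 := by simp [hwdef]; try ring
    have hpos : ∀ i, 0 < w i := by
      have h0 : (0:ℝ) < 1/(d3:ℝ) := by positivity
      have h1 : (0:ℝ) < 1 - 1/(d2:ℝ) := by
        rw [sub_pos, div_lt_one (by linarith)]; linarith
      have h2 : (0:ℝ) < 1/(d2:ℝ) - 1/(d3:ℝ) := by
        rw [sub_pos, div_lt_div_iff₀ (by linarith) (by linarith)]; nlinarith
      intro i
      fin_cases i
      · exact h0
      · exact h1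
      · exact h2
    have hmem := mem_interior_tri x y h w hw hpos
    apply hempty p
    have : toR2 p = w 1 • toR2 x + w 2 • toR2 (x + y) := by
      simp only [toR2, hp, hwdef, Prod.smul_mk, Prod.mk_add_mk, smul_eq_mul,
        Matrix.cons_val_one, Matrix.head_cons, Matrix.cons_val_two, Matrix.tail_cons]
      have e1 : ((x+y).1 : ℝ) = (x.1 : ℝ) + y.1 := by push_cast [Prod.fst_add]; ring
      have e2 : ((x+y).2 : ℝ) = (x.2 : ℝ) + y.2 := by push_cast [Prod.snd_add]; ring
      refine Prod.ext ?_ ?_ <;> push_cast <;> simp only [e1, e2]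
      · rw [A1, B1]; field_simp; ring
      · rw [A2, B2]; field_simp; ring
    rw [this]; exact hmem
  · -- d3 < d2 : interior point z' - y'
    set p : ℤ × ℤ := (z1' - y1', z2' - y2') with hp
    set w : Fin 3 → ℝ := ![1 - 1/(d3:ℝ), 1/(d2:ℝ), 1/(d3:ℝ) - 1/(d2:ℝ)] with hwdef
    have hlR : (d3 : ℝ) < d2 := by exact_mod_cast hgt
    have hw : w 0 + w 1 + w 2 = 1 := by simp [hwdef]; try ring
    have hpos : ∀ i, 0 < w i := by
      have h0 : (0:ℝ) < 1 - 1/(d3:ℝ) := by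
        rw [sub_pos, div_lt_one (by linarith)]; linarith
      have h1 : (0:ℝ) < 1/(d2:ℝ) := by positivity
      have h2 : (0:ℝ) < 1/(d3:ℝ) - 1/(d2:ℝ) := by
        rw [sub_pos, div_lt_div_iff₀ (by linarith) (by linarith)]; nlinarith
      intro i
      fin_cases i
      · exact h0
      · exact h1
      · exact h2
    have hmem := mem_interior_tri x y h w hw hpos
    apply hempty p
    have : toR2 p = w 1 • toR2 x + w 2 • toR2 (x + y) := by
      simp only [toR2, hp, hwdef, Prod.smul_mk, Prod.mk_add_mk, smul_eq_mul,
        Matrix.cons_val_one, Matrix.head_cons, Matrix.cons_val_two, Matrix.tail_cons]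
      have e1 : ((x+y).1 : ℝ) = (x.1 : ℝ) + y.1 := by push_cast [Prod.fst_add]; ring
      have e2 : ((x+y).2 : ℝ) = (x.2 : ℝ) + y.2 := by push_cast [Prod.snd_add]; ring
      refine Prod.ext ?_ ?_ <;> push_cast <;> simp only [e1, e2]
      · rw [A1, B1]; field_simp; ring
      · rw [A2, B2]; field_simp; ring
    rw [this]; exact hmem
end

section
/- Let x, y ∈ ℤ² be non-collinear with deg(x) = deg(y) = 1. If the triangle with vertices 0, x, x+y has no interior lattice points, then deg(x+y) = |det(x,y)|. -/
lemma mem_interior_tri_s2 (x y : ℤ × ℤ) (h : x.1 * y.2 - x.2 * y.1 ≠ 0)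
    {u v : ℝ} (hv : 0 < v) (hvu : v < u) (hu : u < 1) :
    ((u * x.1 + v * y.1, u * x.2 + v * y.2) : ℝ × ℝ) ∈ interior (tri x y) := by
  have hr : ((x.1 : ℝ) * y.2 - x.2 * y.1) ≠ 0 := by
    intro hc
    apply h
    have := hc
    push_cast at this
    exact_mod_cast sub_eq_zero.mpr (by exact_mod_cast sub_eq_zero.mp this)
  set X1 : ℝ := (x.1 : ℝ)
  set X2 : ℝ := (x.2 : ℝ)
  set Y1 : ℝ := (y.1 : ℝ)
  set Y2 : ℝ := (y.2 : ℝ)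
  have hr' : X1 * Y2 - X2 * Y1 ≠ 0 := hr
  -- the linear change of coordinates
  let ψ : ℝ × ℝ → ℝ × ℝ := fun w => (w.1 * X1 + w.2 * Y1, w.1 * X2 + w.2 * Y2)
  let χ : ℝ × ℝ → ℝ × ℝ := fun s =>
    ((s.1 * Y2 - s.2 * Y1) / (X1 * Y2 - X2 * Y1), (s.2 * X1 - s.1 * X2) / (X1 * Y2 - X2 * Y1))
  have hleft : Function.LeftInverse χ ψ := by
    intro w
    show (_, _) = w
    have h1 : ((w.1 * X1 + w.2 * Y1) * Y2 - (w.1 * X2 + w.2 * Y2) * Y1) / (X1 * Y2 - X2 * Y1) = w.1 := by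
      rw [div_eq_iff hr']
      ring
    have h2 : ((w.1 * X2 + w.2 * Y2) * X1 - (w.1 * X1 + w.2 * Y1) * X2) / (X1 * Y2 - X2 * Y1) = w.2 := by
      rw [div_eq_iff hr']
      ring
    exact Prod.ext h1 h2
  have hright : Function.RightInverse χ ψ := by
    intro s
    show (_, _) = s
    have h1 : (s.1 * Y2 - s.2 * Y1) / (X1 * Y2 - X2 * Y1) * X1 +
        (s.2 * X1 - s.1 * X2) / (X1 * Y2 - X2 * Y1) * Y1 = s.1 := by
      rw [div_mul_eq_mul_div, div_mul_eq_mul_div, ← add_div, div_eq_iff hr']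
      ring
    have h2 : (s.1 * Y2 - s.2 * Y1) / (X1 * Y2 - X2 * Y1) * X2 +
        (s.2 * X1 - s.1 * X2) / (X1 * Y2 - X2 * Y1) * Y2 = s.2 := by
      rw [div_mul_eq_mul_div, div_mul_eq_mul_div, ← add_div, div_eq_iff hr']
      ring
    exact Prod.ext h1 h2
  let e : Homeomorph (ℝ × ℝ) (ℝ × ℝ) :=
    { toFun := ψ
      invFun := χ
      left_inv := hleft
      right_inv := hright
      continuous_toFun := by fun_prop
      continuous_invFun := by fun_prop }
  let O : Set (ℝ × ℝ) := {w | 0 < w.2} ∩ {w | w.2 < w.1} ∩ {w | w.1 < 1}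
  have hO : IsOpen O :=
    ((isOpen_lt continuous_const continuous_snd).inter
      (isOpen_lt continuous_snd continuous_fst)).inter (isOpen_lt continuous_fst continuous_const)
  have himg_open : IsOpen (ψ '' O) := e.isOpenMap O hO
  -- the image is inside the triangle
  have hsub : ψ '' O ⊆ tri x y := by
    rintro _ ⟨w, hw, rfl⟩
    obtain ⟨⟨hw1, hw2⟩, hw3⟩ := hw
    simp only [Set.mem_setOf_eq] at hw1 hw2 hw3
    have h0 : (0 : ℝ × ℝ) ∈ tri x y := subset_convexHull ℝ _ (by simp)
    have hX : toR2 x ∈ tri x y := subset_convexHull ℝ _ (by simp [tri])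
    have hZ : toR2 (x + y) ∈ tri x y := subset_convexHull ℝ _ (by simp [tri])
    have hconv : Convex ℝ (tri x y) := convex_convexHull ℝ _
    set β := w.1 - w.2 with hβ
    set γ := w.2 with hγ
    have hβγ : 0 < β + γ := by simp only [hβ, hγ]; linarith
    have hβ0 : 0 ≤ β := by simp only [hβ, hγ]; linarith
    have hγ0 : 0 ≤ γ := le_of_lt hw1
    have hq : (β / (β + γ)) • toR2 x + (γ / (β + γ)) • toR2 (x + y) ∈ tri x y := by
      apply hconv.segment_subset hX hZ
      exact ⟨β / (β + γ), γ / (β + γ), by positivity, by positivity, by field_simp, rfl⟩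
    have heq : (1 - w.1) • (0 : ℝ × ℝ) +
        (β + γ) • ((β / (β + γ)) • toR2 x + (γ / (β + γ)) • toR2 (x + y)) = ψ w := by
      have hne : β + γ ≠ 0 := ne_of_gt hβγ
      simp only [toR2, ψ, Prod.fst_add, Prod.snd_add, Prod.smul_mk, smul_eq_mul,
        Prod.mk_add_mk, smul_zero, zero_add, Prod.ext_iff, Prod.smul_fst, Prod.smul_snd]
      push_cast
      constructor <;> (field_simp; ring)
    exact hconv.segment_subset h0 hq
      ⟨1 - w.1, β + γ, by linarith, le_of_lt hβγ, by simp only [hβ, hγ]; ring, heq⟩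
  have hmem : ((u * X1 + v * Y1, u * X2 + v * Y2) : ℝ × ℝ) ∈ ψ '' O :=
    ⟨(u, v), ⟨⟨hv, hvu⟩, hu⟩, rfl⟩
  exact interior_maximal hsub himg_open hmem

/-- If `x, y` are non-collinear with `deg x = deg y = 1` and the triangle with vertices
`0, x, x+y` has no interior lattice points, then `deg (x+y) = |det(x,y)|`. -/
theorem deg_add_eq_det_of_no_interior_point (x y : ℤ × ℤ)
    (h : x.1 * y.2 - x.2 * y.1 ≠ 0)
    (hx : Int.gcd x.1 x.2 = 1) (hy : Int.gcd y.1 y.2 = 1)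
    (hempty : ∀ p : ℤ × ℤ, toR2 p ∉ interior (tri x y)) :
    Int.gcd (x + y).1 (x + y).2 = (x.1 * y.2 - x.2 * y.1).natAbs := by
  set d : ℤ := x.1 * y.2 - x.2 * y.1 with hd
  set D : ℕ := d.natAbs with hDdef
  set g : ℕ := Int.gcd (x + y).1 (x + y).2 with hgdef
  have hz1 : (x + y).1 = x.1 + y.1 := rfl
  have hz2 : (x + y).2 = x.2 + y.2 := rfl
  have hgz1 : (g : ℤ) ∣ (x + y).1 := Int.gcd_dvd_left _ _
  have hgz2 : (g : ℤ) ∣ (x + y).2 := Int.gcd_dvd_right _ _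
  have hgd : (g : ℤ) ∣ d := by
    have : d = (x + y).1 * y.2 - (x + y).2 * y.1 := by rw [hz1, hz2]; ring
    rw [this]
    exact dvd_sub (hgz1.mul_right _) (hgz2.mul_right _)
  have hgD : g ∣ D := by
    have h1 : (g : ℤ) ∣ (D : ℤ) := Int.dvd_natAbs.mpr hgd
    exact_mod_cast h1
  have hD0 : 0 < D := Int.natAbs_pos.mpr h
  have hDdvd : (D : ℤ) ∣ d := Int.natAbs_dvd.mpr dvd_rfl
  rcases eq_or_lt_of_le (Nat.le_of_dvd hD0 hgD) with heq | hlt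
  · exact heq
  exfalso
  have hg0 : 0 < g := by
    rcases Nat.eq_zero_or_pos g with h0 | h0
    · exfalso
      obtain ⟨e1, e2⟩ := Int.gcd_eq_zero_iff.mp h0
      apply h
      rw [hz1] at e1
      rw [hz2] at e2
      have hy1 : y.1 = -x.1 := by linarith
      have hy2 : y.2 = -x.2 := by linarith
      rw [hd, hy1, hy2]; ring
    · exact h0
  set e : ℕ := D / g with hedef
  have heg : e * g = D := Nat.div_mul_cancel hgD
  have he2 : 2 ≤ e := by
    by_contra hc
    interval_cases e <;> omega
  have heD : e ≤ D := by
    calc e = e * 1 := (mul_one e).symm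
    _ ≤ e * g := Nat.mul_le_mul_left e hg0
    _ = D := heg
  -- the lattice condition
  set L : ℤ → ℤ → Prop := fun a b =>
    (D : ℤ) ∣ a * x.1 + b * y.1 ∧ (D : ℤ) ∣ a * x.2 + b * y.2 with hLdef
  have hLsub : ∀ a b c c' k : ℤ, L a b → L c c' → L (a - k * c) (b - k * c') := by
    intro a b c c' k h1 h2
    constructor
    · have : (a - k * c) * x.1 + (b - k * c') * y.1 =
        (a * x.1 + b * y.1) - k * (c * x.1 + c' * y.1) := by ring
      rw [this]
      exact dvd_sub h1.1 (h2.1.mul_left k)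
    · have : (a - k * c) * x.2 + (b - k * c') * y.2 =
        (a * x.2 + b * y.2) - k * (c * x.2 + c' * y.2) := by ring
      rw [this]
      exact dvd_sub h1.2 (h2.2.mul_left k)
  have hLee : L e e := by
    constructor
    · obtain ⟨w1, hw1⟩ := hgz1
      refine ⟨w1, ?_⟩
      rw [show (e:ℤ) * x.1 + (e:ℤ) * y.1 = (e:ℤ) * (x+y).1 by rw [hz1]; ring, hw1,
        ← mul_assoc]
      norm_cast
      rw [heg]
    · obtain ⟨w2, hw2⟩ := hgz2
      refine ⟨w2, ?_⟩
      rw [show (e:ℤ) * x.2 + (e:ℤ) * y.2 = (e:ℤ) * (x+y).2 by rw [hz2]; ring, hw2,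
        ← mul_assoc]
      norm_cast
      rw [heg]
  have hLD0 : L D 0 := ⟨⟨x.1, by ring⟩, ⟨x.2, by ring⟩⟩
  have hLDD : L D D := ⟨⟨x.1 + y.1, by ring⟩, ⟨x.2 + y.2, by ring⟩⟩
  have hnb : ¬ ((e : ℤ) ∣ x.1 ∧ (e : ℤ) ∣ x.2) := by
    rintro ⟨h1, h2⟩
    have hdg : (e : ℤ) ∣ (Int.gcd x.1 x.2 : ℤ) := Int.dvd_coe_gcd h1 h2
    rw [hx] at hdg
    have := Int.le_of_dvd one_pos hdg
    omega
  -- starting point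
  have hstart : ∃ a0 b0 : ℤ, L a0 b0 ∧ ¬ (e : ℤ) ∣ b0 := by
    by_cases hc : (e : ℤ) ∣ x.1
    · refine ⟨y.2, -x.2,
        ⟨by rw [show y.2 * x.1 + -x.2 * y.1 = d by rw [hd]; ring]; exact hDdvd,
         ⟨0, by ring⟩⟩, ?_⟩
      rw [Int.dvd_neg]
      intro hc2
      exact hnb ⟨hc, hc2⟩
    · exact ⟨-y.1, x.1,
        ⟨⟨0, by ring⟩,
         by rw [show -y.1 * x.2 + x.1 * y.2 = d by rw [hd]; ring]; exact hDdvd⟩, hc⟩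
  obtain ⟨a0, b0, hL0, hnd⟩ := hstart
  have heZ : (0 : ℤ) < (e : ℤ) := by exact_mod_cast Nat.lt_of_lt_of_le Nat.zero_lt_two he2
  have hDZ : (0 : ℤ) < (D : ℤ) := by exact_mod_cast hD0
  set k : ℤ := b0 / e with hkdef
  set b1 : ℤ := b0 - k * e with hb1def
  have hb1mod : b1 = b0 % e := by rw [hb1def, hkdef, Int.emod_def]; ring
  have hb1nonneg : 0 ≤ b1 := by rw [hb1mod]; exact Int.emod_nonneg b0 (ne_of_gt heZ)
  have hb1lt : b1 < e := by rw [hb1mod]; exact Int.emod_lt_of_pos b0 heZ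
  have hb1pos : 0 < b1 := by
    rcases lt_or_eq_of_le hb1nonneg with h' | h'
    · exact h'
    · exact absurd ⟨k, by rw [hb1def] at h'; linarith⟩ hnd
  have hL1 : L (a0 - k * e) b1 := by
    have := hLsub a0 b0 e e k hL0 hLee
    rwa [← hb1def] at this
  set m : ℤ := (a0 - k * e) / D with hmdef
  set a2 : ℤ := (a0 - k * e) - m * D with ha2def
  have hL2 : L a2 b1 := by
    have := hLsub (a0 - k * e) b1 D 0 m hL1 hLD0
    rwa [mul_zero, sub_zero, ← ha2def] at this
  have ha2mod : a2 = (a0 - k * e) % D := by rw [ha2def, hmdef, Int.emod_def]; ring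
  have ha2nonneg : 0 ≤ a2 := by rw [ha2mod]; exact Int.emod_nonneg _ (ne_of_gt hDZ)
  have ha2lt : a2 < D := by rw [ha2mod]; exact Int.emod_lt_of_pos _ hDZ
  have ha2pos : 0 < a2 := by
    rcases lt_or_eq_of_le ha2nonneg with h' | h'
    · exact h'
    · exfalso
      obtain ⟨hh1, hh2⟩ := hL2
      rw [← h', zero_mul, zero_add] at hh1 hh2
      have hdg : (D : ℤ) ∣ (Int.gcd (b1 * y.1) (b1 * y.2) : ℤ) := Int.dvd_coe_gcd hh1 hh2
      rw [Int.gcd_mul_left, hy, mul_one] at hdg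
      have hle : (D : ℤ) ≤ (b1.natAbs : ℤ) :=
        Int.le_of_dvd (by exact_mod_cast Int.natAbs_pos.mpr (ne_of_gt hb1pos)) hdg
      have : (e : ℤ) ≤ (D : ℤ) := by exact_mod_cast heD
      omega
  -- obtain the normalized pair
  have hfinal : ∃ a b : ℤ, L a b ∧ 0 < b ∧ b < a ∧ a < D := by
    rcases lt_trichotomy a2 b1 with hc | hc | hc
    · refine ⟨(D : ℤ) - a2, (D : ℤ) - b1, ?_, ?_, ?_, ?_⟩
      · have := hLsub D D a2 b1 1 hLDD hL2
        rwa [one_mul, one_mul] at this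
      · have : (e : ℤ) ≤ (D : ℤ) := by exact_mod_cast heD
        omega
      · omega
      · omega
    · exfalso
      obtain ⟨hh1, hh2⟩ := hL2
      rw [← hc] at hh1 hh2
      rw [show a2 * x.1 + a2 * y.1 = a2 * (x + y).1 by rw [hz1]; ring] at hh1
      rw [show a2 * x.2 + a2 * y.2 = a2 * (x + y).2 by rw [hz2]; ring] at hh2
      have hdg : (D : ℤ) ∣ (Int.gcd (a2 * (x + y).1) (a2 * (x + y).2) : ℤ) :=
        Int.dvd_coe_gcd hh1 hh2
      rw [Int.gcd_mul_left, ← hgdef] at hdg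
      have hdgn : D ∣ a2.natAbs * g := by exact_mod_cast hdg
      rw [← heg] at hdgn
      have hee : e ∣ a2.natAbs := (Nat.mul_dvd_mul_iff_right hg0).mp hdgn
      have : e ≤ a2.natAbs := Nat.le_of_dvd (Int.natAbs_pos.mpr (ne_of_gt ha2pos)) hee
      omega
    · exact ⟨a2, b1, hL2, hb1pos, hc, ha2lt⟩
  obtain ⟨a, b, hL, hb, hba, haD⟩ := hfinal
  -- build the interior lattice point
  set p : ℤ × ℤ := ((a * x.1 + b * y.1) / D, (a * x.2 + b * y.2) / D) with hpdef
  apply hempty p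
  have hDR : (0 : ℝ) < (D : ℝ) := by exact_mod_cast hD0
  have c1 : ((p.1 : ℤ) : ℝ) = (a : ℝ) / (D : ℝ) * (x.1 : ℝ) + (b : ℝ) / (D : ℝ) * (y.1 : ℝ) := by
    rw [hpdef]
    rw [show (((a * x.1 + b * y.1) / (D : ℤ), (a * x.2 + b * y.2) / (D : ℤ)) : ℤ × ℤ).1 =
      (a * x.1 + b * y.1) / (D : ℤ) from rfl]
    rw [Int.cast_div_charZero hL.1]
    push_cast
    ring
  have c2 : ((p.2 : ℤ) : ℝ) = (a : ℝ) / (D : ℝ) * (x.2 : ℝ) + (b : ℝ) / (D : ℝ) * (y.2 : ℝ) := by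
    rw [hpdef]
    rw [show (((a * x.1 + b * y.1) / (D : ℤ), (a * x.2 + b * y.2) / (D : ℤ)) : ℤ × ℤ).2 =
      (a * x.2 + b * y.2) / (D : ℤ) from rfl]
    rw [Int.cast_div_charZero hL.2]
    push_cast
    ring
  have hps : toR2 p = (((a : ℝ) / D) * x.1 + ((b : ℝ) / D) * y.1,
      ((a : ℝ) / D) * x.2 + ((b : ℝ) / D) * y.2) := by
    rw [toR2, c1, c2]
  rw [hps]
  have hbR : (0 : ℝ) < (b : ℝ) := by exact_mod_cast hb
  have hbaR : (b : ℝ) < (a : ℝ) := by exact_mod_cast hba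
  have haDR : (a : ℝ) < (D : ℝ) := by exact_mod_cast haD
  exact mem_interior_tri_s2 x y h (div_pos hbR hDR)
    (div_lt_div_of_pos_right hbaR hDR)
    ((div_lt_one hDR).mpr haDR)
end

section
/- Let x, y ∈ ℤ² be non-collinear such that the triangle Δ with vertices 0, x, x+y contains at least one interior lattice point. Then there exists an interior lattice point z of Δ such that the triangle with vertices 0, z, x contains no interior lattice point and deg(z) = deg(x−z) = 1. -/
/-- The triangle (convex hull) with vertices `a`, `b`, `c` in the real plane. -/
def tri3 (a b c : ℤ × ℤ) : Set (ℝ × ℝ) := convexHull ℝ {toR2 a, toR2 b, toR2 c}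

noncomputable def scoef (A B p : ℝ × ℝ) : ℝ :=
  (p.1 * B.2 - p.2 * B.1) / (A.1 * B.2 - A.2 * B.1)

noncomputable def tcoef (A B p : ℝ × ℝ) : ℝ :=
  (A.1 * p.2 - A.2 * p.1) / (A.1 * B.2 - A.2 * B.1)

lemma scoef_comb (A B : ℝ × ℝ) (u v : ℝ) (q r : ℝ × ℝ) :
    scoef A B (u • q + v • r) = u * scoef A B q + v * scoef A B r := by
  simp only [scoef, Prod.fst_add, Prod.snd_add, Prod.smul_fst, Prod.smul_snd, smul_eq_mul]
  ring

lemma tcoef_comb (A B : ℝ × ℝ) (u v : ℝ) (q r : ℝ × ℝ) :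
    tcoef A B (u • q + v • r) = u * tcoef A B q + v * tcoef A B r := by
  simp only [tcoef, Prod.fst_add, Prod.snd_add, Prod.smul_fst, Prod.smul_snd, smul_eq_mul]
  ring

lemma scoef_add_smul (A B : ℝ × ℝ) (c : ℝ) (q r : ℝ × ℝ) :
    scoef A B (q + c • r) = scoef A B q + c * scoef A B r := by
  have := scoef_comb A B 1 c q r; simpa using this

lemma tcoef_add_smul (A B : ℝ × ℝ) (c : ℝ) (q r : ℝ × ℝ) :
    tcoef A B (q + c • r) = tcoef A B q + c * tcoef A B r := by
  have := tcoef_comb A B 1 c q r; simpa using this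

lemma scoef_smul (A B : ℝ × ℝ) (c : ℝ) (q : ℝ × ℝ) : scoef A B (c • q) = c * scoef A B q := by
  simp only [scoef, Prod.smul_fst, Prod.smul_snd, smul_eq_mul]
  ring

lemma tcoef_smul (A B : ℝ × ℝ) (c : ℝ) (q : ℝ × ℝ) : tcoef A B (c • q) = c * tcoef A B q := by
  simp only [tcoef, Prod.smul_fst, Prod.smul_snd, smul_eq_mul]
  ring

lemma scoef_A (A B : ℝ × ℝ) (hD : A.1 * B.2 - A.2 * B.1 ≠ 0) : scoef A B A = 1 := div_self hD

lemma tcoef_B (A B : ℝ × ℝ) (hD : A.1 * B.2 - A.2 * B.1 ≠ 0) : tcoef A B B = 1 := div_self hD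

lemma scoef_B (A B : ℝ × ℝ) : scoef A B B = 0 := by
  have h : B.1 * B.2 - B.2 * B.1 = 0 := by ring
  simp [scoef, h]

lemma tcoef_A (A B : ℝ × ℝ) : tcoef A B A = 0 := by
  have h : A.1 * A.2 - A.2 * A.1 = 0 := by ring
  simp [tcoef, h]

lemma scoef_zero (A B : ℝ × ℝ) : scoef A B 0 = 0 := by simp [scoef]

lemma tcoef_zero (A B : ℝ × ℝ) : tcoef A B 0 = 0 := by simp [tcoef]

lemma recon (A B : ℝ × ℝ) (hD : A.1 * B.2 - A.2 * B.1 ≠ 0) (p : ℝ × ℝ) :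
    p = scoef A B p • A + tcoef A B p • B := by
  rw [Prod.ext_iff]
  constructor <;>
  · simp only [scoef, tcoef, Prod.fst_add, Prod.snd_add, Prod.smul_fst, Prod.smul_snd, smul_eq_mul]
    rw [div_mul_eq_mul_div, div_mul_eq_mul_div, ← add_div, eq_div_iff hD]
    ring

open Set in
lemma hull_subset_s (A B : ℝ × ℝ) (hD : A.1 * B.2 - A.2 * B.1 ≠ 0) :
    convexHull ℝ {(0 : ℝ × ℝ), A, B} ⊆ {q | 0 ≤ scoef A B q ∧ 0 ≤ tcoef A B q ∧
      scoef A B q + tcoef A B q ≤ 1} := by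
  apply convexHull_min
  · intro q hq
    simp only [Set.mem_insert_iff, Set.mem_singleton_iff] at hq
    rcases hq with h | h | h <;> rw [h] <;> simp only [Set.mem_setOf_eq]
    · simp [scoef_zero, tcoef_zero]
    · simp [scoef_A A B hD, tcoef_A]
    · simp [scoef_B, tcoef_B A B hD]
  · intro q hq r hr a b ha hb hab
    simp only [mem_setOf_eq] at hq hr ⊢
    rw [scoef_comb, tcoef_comb]
    refine ⟨by nlinarith [hq.1, hr.1], by nlinarith [hq.2.1, hr.2.1], by nlinarith [hq.2.2, hr.2.2]⟩

lemma mem_interior_triangle (A B : ℝ × ℝ) (hD : A.1 * B.2 - A.2 * B.1 ≠ 0) (p : ℝ × ℝ) :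
    p ∈ interior (convexHull ℝ {(0 : ℝ × ℝ), A, B}) ↔
      0 < scoef A B p ∧ 0 < tcoef A B p ∧ scoef A B p + tcoef A B p < 1 := by
  have hcont_s : Continuous (scoef A B) := by
    have : Continuous fun q : ℝ × ℝ => q.1 * B.2 - q.2 * B.1 := by fun_prop
    exact this.div_const _
  have hcont_t : Continuous (tcoef A B) := by
    have : Continuous fun q : ℝ × ℝ => A.1 * q.2 - A.2 * q.1 := by fun_prop
    exact this.div_const _
  constructor
  · intro hp
    obtain ⟨ε, hε, hball⟩ := Metric.mem_nhds_iff.mp (mem_interior_iff_mem_nhds.mp hp)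
    have hhull : ∀ q ∈ Metric.ball p ε, 0 ≤ scoef A B q ∧ 0 ≤ tcoef A B q ∧
        scoef A B q + tcoef A B q ≤ 1 := fun q hq => hull_subset_s A B hD (hball hq)
    have key : ∀ w : ℝ × ℝ, ∀ c : ℝ, c ≠ 0 → |c| * ‖w‖ < ε → p + c • w ∈ Metric.ball p ε := by
      intro w c hc hlt
      rw [Metric.mem_ball, dist_eq_norm, add_sub_cancel_left, norm_smul]
      simpa using hlt
    -- choose δ for a given vector w
    have exδ : ∀ w : ℝ × ℝ, ∃ δ : ℝ, 0 < δ ∧ δ * ‖w‖ < ε := by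
      intro w
      refine ⟨ε / (2 * (‖w‖ + 1)), by positivity, ?_⟩
      rw [div_mul_eq_mul_div, div_lt_iff₀ (by positivity)]
      nlinarith [norm_nonneg w]
    refine ⟨?_, ?_, ?_⟩
    · by_contra h'
      push_neg at h'
      obtain ⟨δ, hδ, hδε⟩ := exδ A
      have hmem := key A (-δ) (neg_ne_zero.mpr (ne_of_gt hδ)) (by rwa [abs_neg, abs_of_pos hδ])
      have := (hhull _ hmem).1
      rw [scoef_add_smul, scoef_A A B hD] at this
      nlinarith
    · by_contra h'
      push_neg at h'
      obtain ⟨δ, hδ, hδε⟩ := exδ B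
      have hmem := key B (-δ) (neg_ne_zero.mpr (ne_of_gt hδ)) (by rwa [abs_neg, abs_of_pos hδ])
      have := (hhull _ hmem).2.1
      rw [tcoef_add_smul, tcoef_B A B hD] at this
      nlinarith
    · by_contra h'
      push_neg at h'
      obtain ⟨δ, hδ, hδε⟩ := exδ A
      have hmem := key A δ (ne_of_gt hδ) (by rwa [abs_of_pos hδ])
      have := (hhull _ hmem).2.2
      rw [scoef_add_smul, tcoef_add_smul, scoef_A A B hD, tcoef_A] at this
      nlinarith
  · intro ⟨hs, ht, hst⟩
    have hTopen : IsOpen {q : ℝ × ℝ | 0 < scoef A B q ∧ 0 < tcoef A B q ∧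
        scoef A B q + tcoef A B q < 1} := by
      exact (isOpen_lt continuous_const hcont_s).and
        ((isOpen_lt continuous_const hcont_t).and
          (isOpen_lt (hcont_s.add hcont_t) continuous_const))
    have hTsub : {q : ℝ × ℝ | 0 < scoef A B q ∧ 0 < tcoef A B q ∧
        scoef A B q + tcoef A B q < 1} ⊆ convexHull ℝ {(0 : ℝ × ℝ), A, B} := by
      intro q hq
      obtain ⟨hs', ht', hst'⟩ := hq
      set s := scoef A B q
      set t := tcoef A B q
      have hσ : 0 < s + t := by linarith
      have hconv := convex_convexHull ℝ ({(0 : ℝ × ℝ), A, B})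
      have hA : A ∈ convexHull ℝ {(0 : ℝ × ℝ), A, B} := subset_convexHull _ _ (by simp)
      have hB : B ∈ convexHull ℝ {(0 : ℝ × ℝ), A, B} := subset_convexHull _ _ (by simp)
      have h0 : (0 : ℝ × ℝ) ∈ convexHull ℝ {(0 : ℝ × ℝ), A, B} := subset_convexHull _ _ (by simp)
      have hm : (s / (s + t)) • A + (t / (s + t)) • B ∈ convexHull ℝ {(0 : ℝ × ℝ), A, B} :=
        hconv hA hB (by positivity) (by positivity) (by field_simp)
      have hq' : (s + t) • ((s / (s + t)) • A + (t / (s + t)) • B) + (1 - (s + t)) • (0 : ℝ × ℝ)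
          ∈ convexHull ℝ {(0 : ℝ × ℝ), A, B} := hconv hm h0 hσ.le (by linarith) (by ring)
      have heq : (s + t) • ((s / (s + t)) • A + (t / (s + t)) • B) + (1 - (s + t)) • (0 : ℝ × ℝ)
          = s • A + t • B := by
        rw [smul_add, smul_smul, smul_smul, smul_zero, add_zero,
          mul_div_cancel₀ _ (ne_of_gt hσ), mul_div_cancel₀ _ (ne_of_gt hσ)]
      rw [heq] at hq'
      rwa [recon A B hD q]
    exact interior_maximal hTsub hTopen ⟨hs, ht, hst⟩

lemma toR2_zero : toR2 0 = 0 := by simp [toR2, Prod.ext_iff]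

lemma toR2_add (p q : ℤ × ℤ) : toR2 (p + q) = toR2 p + toR2 q := by
  simp [toR2, Prod.ext_iff]


set_option maxHeartbeats 1000000 in
/-- If the triangle `Δ` with vertices `0, x, x+y` (for non-collinear `x, y`) has an interior
lattice point, then it has an interior lattice point `z` such that the triangle with vertices
`0, z, x` has no interior lattice point and `deg z = deg (x - z) = 1`. -/
theorem exists_good_interior_point (x y : ℤ × ℤ)
    (h : x.1 * y.2 - x.2 * y.1 ≠ 0)
    (hne : ∃ w : ℤ × ℤ, toR2 w ∈ interior (tri3 0 x (x + y))) :
    ∃ z : ℤ × ℤ, toR2 z ∈ interior (tri3 0 x (x + y)) ∧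
      (∀ p : ℤ × ℤ, toR2 p ∉ interior (tri3 0 z x)) ∧
      Int.gcd z.1 z.2 = 1 ∧ Int.gcd (x - z).1 (x - z).2 = 1 := by
  classical
  obtain ⟨w0, hw0⟩ := hne
  set A : ℝ × ℝ := toR2 x with hAdef
  set B : ℝ × ℝ := toR2 x + toR2 y with hBdef
  have htri : tri3 0 x (x + y) = convexHull ℝ {(0 : ℝ × ℝ), A, B} := by
    unfold tri3
    rw [toR2_zero, toR2_add]
  have hden : A.1 * B.2 - A.2 * B.1 = ((x.1 * y.2 - x.2 * y.1 : ℤ) : ℝ) := by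
    simp only [hAdef, hBdef, toR2, Prod.fst_add, Prod.snd_add]
    push_cast
    ring
  have hD : A.1 * B.2 - A.2 * B.1 ≠ 0 := by
    rw [hden]
    exact_mod_cast h
  have hDcast : ((x.1 * y.2 - x.2 * y.1 : ℤ) : ℝ) ≠ 0 := by exact_mod_cast h
  have hchar : ∀ w : ℤ × ℤ, toR2 w ∈ interior (tri3 0 x (x + y)) ↔
      0 < scoef A B (toR2 w) ∧ 0 < tcoef A B (toR2 w) ∧
        scoef A B (toR2 w) + tcoef A B (toR2 w) < 1 := by
    intro w
    rw [htri, mem_interior_triangle A B hD]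
  have hnum : ∀ w : ℤ × ℤ, tcoef A B (toR2 w) =
      ((x.1 * w.2 - x.2 * w.1 : ℤ) : ℝ) / ((x.1 * y.2 - x.2 * y.1 : ℤ) : ℝ) := by
    intro w
    simp only [tcoef, hAdef, hBdef, toR2, Prod.fst_add, Prod.snd_add]
    push_cast
    ring
  -- minimal |det(x, w)| over interior lattice points
  set S : Set ℕ := {n | ∃ w : ℤ × ℤ, toR2 w ∈ interior (tri3 0 x (x + y)) ∧
      (x.1 * w.2 - x.2 * w.1).natAbs = n} with hSdef
  have hSne : S.Nonempty := ⟨_, w0, hw0, rfl⟩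
  obtain ⟨z, hz, hzN⟩ := Nat.sInf_mem hSne
  have hmin : ∀ w : ℤ × ℤ, toR2 w ∈ interior (tri3 0 x (x + y)) →
      sInf S ≤ (x.1 * w.2 - x.2 * w.1).natAbs := fun w hw => Nat.sInf_le ⟨w, hw, rfl⟩
  obtain ⟨hsz, htz, hsumz⟩ := (hchar z).mp hz
  have hnz : (x.1 * z.2 - x.2 * z.1 : ℤ) ≠ 0 := by
    intro h0
    rw [hnum z, h0] at htz
    simp at htz
  have hn0pos : 0 < sInf S := by
    rw [← hzN]
    exact Int.natAbs_pos.mpr hnz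
  -- the contradiction machine: an interior lattice point with smaller |det|
  have hcontr : ∀ (p : ℤ × ℤ) (c : ℝ), 0 < c → c < 1 →
      toR2 p ∈ interior (tri3 0 x (x + y)) →
      tcoef A B (toR2 p) = c * tcoef A B (toR2 z) → False := by
    intro p c hc hc1 hpmem heq
    have hnp : ((x.1 * p.2 - x.2 * p.1 : ℤ) : ℝ) = c * ((x.1 * z.2 - x.2 * z.1 : ℤ) : ℝ) := by
      have e1 : ((x.1 * p.2 - x.2 * p.1 : ℤ) : ℝ)
          = tcoef A B (toR2 p) * ((x.1 * y.2 - x.2 * y.1 : ℤ) : ℝ) := by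
        rw [hnum p, div_mul_cancel₀ _ hDcast]
      have e2 : ((x.1 * z.2 - x.2 * z.1 : ℤ) : ℝ)
          = tcoef A B (toR2 z) * ((x.1 * y.2 - x.2 * y.1 : ℤ) : ℝ) := by
        rw [hnum z, div_mul_cancel₀ _ hDcast]
      rw [e1, e2, heq]
      ring
    have habs : |((x.1 * p.2 - x.2 * p.1 : ℤ) : ℝ)| < |((x.1 * z.2 - x.2 * z.1 : ℤ) : ℝ)| := by
      rw [hnp, abs_mul, abs_of_pos hc]
      have hpos : 0 < |((x.1 * z.2 - x.2 * z.1 : ℤ) : ℝ)| := by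
        rw [abs_pos]
        exact_mod_cast hnz
      nlinarith
    have habsZ : |x.1 * p.2 - x.2 * p.1| < |x.1 * z.2 - x.2 * z.1| := by exact_mod_cast habs
    have hNlt : (x.1 * p.2 - x.2 * p.1).natAbs < (x.1 * z.2 - x.2 * z.1).natAbs := by
      rw [Int.abs_eq_natAbs, Int.abs_eq_natAbs] at habsZ
      exact_mod_cast habsZ
    have := hmin p hpmem
    omega
  refine ⟨z, hz, ?_, ?_, ?_⟩
  · -- no interior lattice point in triangle 0, z, x
    intro p hp
    have hD'eq : (toR2 z).1 * (toR2 x).2 - (toR2 z).2 * (toR2 x).1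
        = ((z.1 * x.2 - z.2 * x.1 : ℤ) : ℝ) := by
      simp only [toR2]
      push_cast
      ring
    have hzx : (z.1 * x.2 - z.2 * x.1 : ℤ) ≠ 0 := by
      intro h0
      apply hnz
      have : x.1 * z.2 - x.2 * z.1 = -(z.1 * x.2 - z.2 * x.1) := by ring
      rw [this, h0, neg_zero]
    have hD' : (toR2 z).1 * (toR2 x).2 - (toR2 z).2 * (toR2 x).1 ≠ 0 := by
      rw [hD'eq]
      exact_mod_cast hzx
    have htri' : tri3 0 z x = convexHull ℝ {(0 : ℝ × ℝ), toR2 z, toR2 x} := by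
      unfold tri3
      rw [toR2_zero]
    rw [htri', mem_interior_triangle _ _ hD'] at hp
    obtain ⟨hsp, htp, hsump⟩ := hp
    set σ := scoef (toR2 z) (toR2 x) (toR2 p) with hσdef
    set τ := tcoef (toR2 z) (toR2 x) (toR2 p) with hτdef
    have hrec : toR2 p = σ • toR2 z + τ • toR2 x := recon (toR2 z) (toR2 x) hD' (toR2 p)
    have hsP : scoef A B (toR2 p) = σ * scoef A B (toR2 z) + τ := by
      conv_lhs => rw [hrec]
      rw [scoef_comb]
      rw [show scoef A B (toR2 x) = 1 from scoef_A A B hD, mul_one]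
    have htP : tcoef A B (toR2 p) = σ * tcoef A B (toR2 z) := by
      conv_lhs => rw [hrec]
      rw [tcoef_comb]
      rw [show tcoef A B (toR2 x) = 0 from tcoef_A A B, mul_zero, add_zero]
    have hpΔ : toR2 p ∈ interior (tri3 0 x (x + y)) := by
      rw [hchar p]
      refine ⟨?_, ?_, ?_⟩
      · rw [hsP]; nlinarith
      · rw [htP]; exact mul_pos hsp htz
      · rw [hsP, htP]; nlinarith
    exact hcontr p σ hsp (by linarith) hpΔ htP
  · -- gcd z = 1
    by_contra hg
    have hz0 : z ≠ 0 := by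
      intro h0
      rw [h0, toR2_zero, tcoef_zero] at htz
      exact lt_irrefl 0 htz
    have hgne : Int.gcd z.1 z.2 ≠ 0 := fun h0 =>
      hz0 (Prod.ext (Int.gcd_eq_zero_iff.mp h0).1 (Int.gcd_eq_zero_iff.mp h0).2)
    have hg2 : 2 ≤ Int.gcd z.1 z.2 := by omega
    obtain ⟨u, hu⟩ : (Int.gcd z.1 z.2 : ℤ) ∣ z.1 := Int.gcd_dvd_left _ _
    obtain ⟨v, hv⟩ : (Int.gcd z.1 z.2 : ℤ) ∣ z.2 := Int.gcd_dvd_right _ _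
    set g : ℕ := Int.gcd z.1 z.2 with hgdef
    have hgR : (2 : ℝ) ≤ (g : ℝ) := by exact_mod_cast hg2
    have hzz' : toR2 z = (g : ℝ) • toR2 (u, v) := by
      simp only [toR2, Prod.ext_iff, Prod.smul_fst, Prod.smul_snd, smul_eq_mul]
      constructor
      · exact_mod_cast congrArg (fun t : ℤ => (t : ℝ)) hu
      · exact_mod_cast congrArg (fun t : ℤ => (t : ℝ)) hv
    have hs' : scoef A B (toR2 z) = g * scoef A B (toR2 (u, v)) := by
      rw [hzz', scoef_smul]
    have ht' : tcoef A B (toR2 z) = g * tcoef A B (toR2 (u, v)) := by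
      rw [hzz', tcoef_smul]
    have hmem' : toR2 (u, v) ∈ interior (tri3 0 x (x + y)) := by
      rw [hchar]
      refine ⟨?_, ?_, ?_⟩
      · nlinarith
      · nlinarith
      · nlinarith
    have hdet : (x.1 * z.2 - x.2 * z.1 : ℤ) = (g : ℤ) * (x.1 * v - x.2 * u) := by
      rw [hu, hv]; ring
    have hNz : (x.1 * z.2 - x.2 * z.1).natAbs = g * (x.1 * v - x.2 * u).natAbs := by
      rw [hdet, Int.natAbs_mul, Int.natAbs_natCast]
    have hm : sInf S ≤ (x.1 * v - x.2 * u).natAbs := hmin (u, v) hmem'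
    have h2m : 2 * (x.1 * v - x.2 * u).natAbs ≤ g * (x.1 * v - x.2 * u).natAbs :=
      Nat.mul_le_mul_right _ hg2
    have hkey : 2 * (x.1 * v - x.2 * u).natAbs ≤ (x.1 * z.2 - x.2 * z.1).natAbs := by
      rw [hNz]; exact h2m
    omega
  · -- gcd (x - z) = 1
    by_contra hg
    have hw0' : x - z ≠ 0 := by
      intro h0
      have hx : z = x := by
        have := sub_eq_zero.mp h0
        exact this.symm
      rw [hx] at htz
      rw [show tcoef A B (toR2 x) = 0 from tcoef_A A B] at htz
      exact lt_irrefl 0 htz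
    have hgne : Int.gcd (x - z).1 (x - z).2 ≠ 0 := fun h0 =>
      hw0' (Prod.ext (Int.gcd_eq_zero_iff.mp h0).1 (Int.gcd_eq_zero_iff.mp h0).2)
    have hg2 : 2 ≤ Int.gcd (x - z).1 (x - z).2 := by omega
    obtain ⟨u, hu⟩ : (Int.gcd (x - z).1 (x - z).2 : ℤ) ∣ (x - z).1 := Int.gcd_dvd_left _ _
    obtain ⟨v, hv⟩ : (Int.gcd (x - z).1 (x - z).2 : ℤ) ∣ (x - z).2 := Int.gcd_dvd_right _ _
    set g : ℕ := Int.gcd (x - z).1 (x - z).2 with hgdef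
    have hgR : (2 : ℝ) ≤ (g : ℝ) := by exact_mod_cast hg2
    have hgR0 : (g : ℝ) ≠ 0 := by positivity
    set c : ℝ := 1 / (g : ℝ) with hcdef
    have hc : 0 < c := by positivity
    have hc1 : c < 1 := by
      rw [hcdef, div_lt_one (by linarith)]
      linarith
    have huR : ((x.1 : ℝ) - z.1) = g * u := by
      have : ((x - z).1 : ℝ) = ((g : ℤ) : ℝ) * (u : ℝ) := by exact_mod_cast congrArg (fun t : ℤ => (t : ℝ)) hu
      rw [Prod.fst_sub] at this
      push_cast at this ⊢
      linarith
    have hvR : ((x.2 : ℝ) - z.2) = g * v := by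
      have : ((x - z).2 : ℝ) = ((g : ℤ) : ℝ) * (v : ℝ) := by exact_mod_cast congrArg (fun t : ℤ => (t : ℝ)) hv
      rw [Prod.snd_sub] at this
      push_cast at this ⊢
      linarith
    set p : ℤ × ℤ := (z.1 + u, z.2 + v) with hpdef
    have hcg : c * (g : ℝ) = 1 := by
      rw [hcdef]; field_simp
    have hrp : toR2 p = (1 - c) • toR2 z + c • toR2 x := by
      simp only [toR2, hpdef, Prod.ext_iff, Prod.fst_add, Prod.snd_add, Prod.smul_fst,
        Prod.smul_snd, smul_eq_mul]
      constructor
      · push_cast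
        linear_combination (-c) * huR + (-(u : ℝ)) * hcg
      · push_cast
        linear_combination (-c) * hvR + (-(v : ℝ)) * hcg
    have hsP : scoef A B (toR2 p) = (1 - c) * scoef A B (toR2 z) + c := by
      rw [hrp, scoef_comb]
      rw [show scoef A B (toR2 x) = 1 from scoef_A A B hD, mul_one]
    have htP : tcoef A B (toR2 p) = (1 - c) * tcoef A B (toR2 z) := by
      rw [hrp, tcoef_comb]
      rw [show tcoef A B (toR2 x) = 0 from tcoef_A A B, mul_zero, add_zero]
    have hpΔ : toR2 p ∈ interior (tri3 0 x (x + y)) := by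
      rw [hchar]
      refine ⟨?_, ?_, ?_⟩
      · rw [hsP]; nlinarith
      · rw [htP]; nlinarith
      · rw [hsP, htP]; nlinarith
    exact hcontr p (1 - c) (by linarith) (by linarith) hpΔ htP
end

section
/- Fix α ∈ ℤ² with first coordinate rank(α) ≥ 0 lying in (ℤ²)⁺ = {(q,p) : q ≥ 1, or q = 0 and p ≥ 0}, and fix a rational number m. Then there are only finitely many finite sequences (α₁, …, α_t) of elements of (ℤ²)⁺ \ {(0,0)} such that α₁ + ⋯ + α_t = α and the slopes satisfy m ≤ μ(α₁) < μ(α₂) < ⋯ < μ(α_t), where μ(r,d) = d/r for r > 0 and μ(0,d) = +∞. -/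
/-- The region `(ℤ²)⁺ = {(q,p) : q ≥ 1, or q = 0 and p ≥ 0}`. -/
def Zplus (p : ℤ × ℤ) : Prop := 1 ≤ p.1 ∨ (p.1 = 0 ∧ 0 ≤ p.2)

/-- The hallSlope `μ(r,d) = d/r` for `r > 0` and `μ(0,d) = +∞`. -/
noncomputable def hallSlope (p : ℤ × ℤ) : WithTop ℚ :=
  if 0 < p.1 then (((p.2 : ℚ) / (p.1 : ℚ) : ℚ) : WithTop ℚ) else ⊤

private lemma map_fst_sum (l : List (ℤ × ℤ)) : (l.map Prod.fst).sum = l.sum.1 := by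
  induction l with
  | nil => simp
  | cons a t ih => simp [ih]

private lemma map_snd_sum (l : List (ℤ × ℤ)) : (l.map Prod.snd).sum = l.sum.2 := by
  induction l with
  | nil => simp
  | cons a t ih => simp [ih]

private lemma count_pos_le_sum (l : List ℤ) (h : ∀ x ∈ l, 0 ≤ x) :
    (l.countP (fun x => decide (0 < x)) : ℤ) ≤ l.sum := by
  induction l with
  | nil => simp
  | cons a t ih =>
    have ha := h a (List.mem_cons_self ..)
    have iht := ih (fun x hx => h x (List.mem_cons_of_mem _ hx))
    by_cases hpos : 0 < a <;> simp [List.countP_cons, hpos] <;> push_cast <;> omega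

private lemma len_mul_le_sum (l : List ℤ) (c : ℤ) (hc : c ≤ 0) (h : ∀ x ∈ l, c ≤ x) :
    (l.length : ℤ) * c ≤ l.sum := by
  induction l with
  | nil => simp
  | cons a t ih =>
    have ha := h a (List.mem_cons_self ..)
    have iht := ih (fun x hx => h x (List.mem_cons_of_mem _ hx))
    simp only [List.length_cons, List.sum_cons]
    push_cast
    nlinarith

/-- For fixed `α ∈ (ℤ²)⁺` and a rational `m`, there are only finitely many sequences
`(α₁, …, α_t)` in `(ℤ²)⁺ \ {0}` with `α₁ + ⋯ + α_t = α` and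
`m ≤ μ(α₁) < μ(α₂) < ⋯ < μ(α_t)`. -/
theorem finitely_many_HN_types (α : ℤ × ℤ) (hα : Zplus α) (m : ℚ) :
    {l : List (ℤ × ℤ) |
        (∀ a ∈ l, Zplus a ∧ a ≠ 0) ∧ l.sum = α ∧
        (∀ a ∈ l, (m : WithTop ℚ) ≤ hallSlope a) ∧
        l.Chain' fun a b => hallSlope a < hallSlope b}.Finite := by
  classical
  have hr : 0 ≤ α.1 := by rcases hα with h | ⟨h, _⟩ <;> omega
  set L : ℤ := min 0 ⌊m * (α.1 : ℚ)⌋ with hLdef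
  have hL0 : L ≤ 0 := min_le_left _ _
  set U : ℤ := α.2 - (α.1 + 1) * L with hUdef
  set n : ℕ := (α.1 + 1).toNat with hn
  set S : Finset (ℤ × ℤ) := Finset.Icc (0, L) (α.1, U) with hS
  have hfin : ({l : List (↥S) | l.length ≤ n}).Finite := List.finite_length_le _ n
  apply Set.Finite.subset (hfin.image (List.map Subtype.val))
  rintro l ⟨hmem, hsum, hslope, hchain⟩
  -- basic facts
  have hfst_nonneg : ∀ a ∈ l, (0 : ℤ) ≤ a.1 := by
    intro a ha
    rcases (hmem a ha).1 with h | ⟨h, _⟩ <;> omega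
  have hfst_sum : (l.map Prod.fst).sum = α.1 := by rw [map_fst_sum, hsum]
  have hsnd_sum : (l.map Prod.snd).sum = α.2 := by rw [map_snd_sum, hsum]
  have hfst_le : ∀ a ∈ l, a.1 ≤ α.1 := by
    intro a ha
    rw [← hfst_sum]
    exact List.single_le_sum (by simpa using hfst_nonneg) a.1 (List.mem_map_of_mem (f := Prod.fst) ha)
  -- length bound
  have hlen : (l.length : ℤ) ≤ α.1 + 1 := by
    have hsplit : l.length = l.countP (fun a => decide (0 < a.1)) +
        l.countP (fun a => decide (a.1 ≤ 0)) := by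
      simpa using l.length_eq_countP_add_countP (fun a => decide (0 < a.1))
    have h1 : (l.countP (fun a => decide (0 < a.1)) : ℤ) ≤ α.1 := by
      have := count_pos_le_sum (l.map Prod.fst) (by simpa using hfst_nonneg)
      rw [hfst_sum, List.countP_map] at this
      simpa [Function.comp_def] using this
    have h2 : l.countP (fun a => decide (a.1 ≤ 0)) ≤ 1 := by
      by_contra hcon
      push_neg at hcon
      rw [List.countP_eq_length_filter] at hcon
      haveI : IsTrans (ℤ × ℤ) (fun a b => hallSlope a < hallSlope b) :=
        ⟨fun _ _ _ hab hbc => lt_trans hab hbc⟩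
      have hpair : l.Pairwise fun a b => hallSlope a < hallSlope b :=
        List.isChain_iff_pairwise.mp hchain
      have hpairf := hpair.sublist (l.filter_sublist (p := fun a => decide (a.1 ≤ 0)))
      obtain ⟨x, y, t, hxyt⟩ : ∃ x y t,
          l.filter (fun a => decide (a.1 ≤ 0)) = x :: y :: t := by
        rcases hf : l.filter (fun a => decide ((a.1 : ℤ) ≤ 0)) with _ | ⟨x, l2⟩
        · rw [hf] at hcon; simp at hcon
        · rcases l2 with _ | ⟨y, t⟩
          · rw [hf] at hcon; simp at hcon
          · exact ⟨x, y, t, hf⟩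
      rw [hxyt] at hpairf
      have hxy : hallSlope x < hallSlope y :=
        (List.pairwise_cons.mp hpairf).1 y (List.mem_cons_self ..)
      have hx : x ∈ l.filter (fun a => decide ((a.1 : ℤ) ≤ 0)) := by simp [hxyt]
      have hy : y ∈ l.filter (fun a => decide ((a.1 : ℤ) ≤ 0)) := by simp [hxyt]
      have hxs : hallSlope x = ⊤ := by
        rw [List.mem_filter, decide_eq_true_eq] at hx
        simp [hallSlope, not_lt.mpr hx.2]
      have hys : hallSlope y = ⊤ := by
        rw [List.mem_filter, decide_eq_true_eq] at hy
        simp [hallSlope, not_lt.mpr hy.2]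
      rw [hxs, hys] at hxy
      exact lt_irrefl _ hxy
    omega
  -- second coordinate lower bound
  have hsnd_lb : ∀ a ∈ l, L ≤ a.2 := by
    intro a ha
    rcases lt_or_ge 0 a.1 with hpos | hnp
    · have hs := hslope a ha
      rw [hallSlope, if_pos hpos] at hs
      have hs' : m ≤ (a.2 : ℚ) / (a.1 : ℚ) := by exact_mod_cast hs
      have ha1 : (0 : ℚ) < (a.1 : ℚ) := by exact_mod_cast hpos
      have hma : m * (a.1 : ℚ) ≤ (a.2 : ℚ) := (le_div_iff₀ ha1).mp hs'
      have hQ : (L : ℚ) ≤ (a.2 : ℚ) := by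
        rcases le_or_gt 0 m with hm | hm
        · have : (L : ℚ) ≤ 0 := by exact_mod_cast hL0
          nlinarith
        · have hle : (a.1 : ℚ) ≤ (α.1 : ℚ) := by exact_mod_cast hfst_le a ha
          have h1 : m * (α.1 : ℚ) ≤ m * (a.1 : ℚ) := by nlinarith
          have h2 : (⌊m * (α.1 : ℚ)⌋ : ℚ) ≤ m * (α.1 : ℚ) := Int.floor_le _
          have h3 : (L : ℚ) ≤ (⌊m * (α.1 : ℚ)⌋ : ℚ) := by
            exact_mod_cast min_le_right (0 : ℤ) ⌊m * (α.1 : ℚ)⌋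
          linarith
      exact_mod_cast hQ
    · have h0 : a.1 = 0 := le_antisymm hnp (hfst_nonneg a ha)
      rcases (hmem a ha).1 with h | ⟨_, h⟩ <;> omega
  -- second coordinate upper bound
  have hsnd_ub : ∀ a ∈ l, a.2 ≤ U := by
    intro a ha
    have ha2 : a.2 ∈ l.map Prod.snd := List.mem_map_of_mem (f := Prod.snd) ha
    have hperm := List.perm_cons_erase ha2
    have hsum2 : α.2 = a.2 + ((l.map Prod.snd).erase a.2).sum := by
      rw [← hsnd_sum, hperm.sum_eq, List.sum_cons]
    have hlb : (((l.map Prod.snd).erase a.2).length : ℤ) * L ≤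
        ((l.map Prod.snd).erase a.2).sum := by
      apply len_mul_le_sum _ _ hL0
      intro x hx
      have hx' := List.mem_of_mem_erase hx
      obtain ⟨b, hb, rfl⟩ := List.mem_map.mp hx'
      exact hsnd_lb b hb
    have hlenE : ((l.map Prod.snd).erase a.2).length = l.length - 1 := by
      rw [List.length_erase_of_mem ha2, List.length_map]
    have hlpos : 1 ≤ l.length := List.length_pos_iff.mpr (List.ne_nil_of_mem ha)
    have hcast : (((l.map Prod.snd).erase a.2).length : ℤ) = (l.length : ℤ) - 1 := by
      rw [hlenE]; push_cast [hlpos]; omega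
    have hmul : (α.1 + 1) * L ≤ ((l.length : ℤ) - 1) * L :=
      mul_le_mul_of_nonpos_right (by omega) hL0
    rw [hcast] at hlb
    omega
  -- membership
  have hSmem : ∀ a ∈ l, a ∈ S := by
    intro a ha
    rw [hS, Finset.mem_Icc, Prod.le_def, Prod.le_def]
    exact ⟨⟨hfst_nonneg a ha, hsnd_lb a ha⟩, ⟨hfst_le a ha, hsnd_ub a ha⟩⟩
  refine ⟨l.pmap (fun a haS => (⟨a, haS⟩ : ↥S)) hSmem, ?_, ?_⟩
  · simp only [Set.mem_setOf_eq, List.length_pmap]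
    rw [hn]
    omega
  · simp [List.map_pmap]
end
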